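/- arXiv:2403.10626 — 5 statements merged into one kernel-verified Lean document; each statement's English description precedes it below -/
import Mathlib

section
/- Let A be a symmetric n×n integer matrix with even diagonal entries and let Ā = A mod 2. If rank(Ā) ≤ n − 2, then det(A) ≡ 0 mod 4. -/
/-- Corollary 1.3 (last claim): if rank of A mod 2 is at most n-2,
then det(A) ≡ 0 (mod 4). -/
theorem stmt_14 (n : ℕ) (A : Matrix (Fin n) (Fin n) ℤ)
    (hsym : A.IsSymm) (hdiag : ∀ i, Even (A i i))
    (hrank : (A.map (Int.cast : ℤ → ZMod 2)).rank + 2 ≤ n) :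
    ((A.det : ℤ) : ZMod 4) = 0 := by
  classical
  set B := A.map (Int.cast : ℤ → ZMod 2) with hB
  -- kernel has dimension ≥ 2
  have hrn := LinearMap.finrank_range_add_finrank_ker B.mulVecLin
  have hfr : Module.finrank (ZMod 2) (Fin n → ZMod 2) = n := by simp
  have hker : 2 ≤ Module.finrank (ZMod 2) (LinearMap.ker B.mulVecLin) := by
    have : B.rank = Module.finrank (ZMod 2) (LinearMap.range B.mulVecLin) := rfl
    omega
  -- two independent kernel vectors
  set K := LinearMap.ker B.mulVecLin with hK
  let bk := Module.finBasis (ZMod 2) K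
  have hd : Module.finrank (ZMod 2) K = Module.finrank (ZMod 2) K := rfl
  let v : Fin n → ZMod 2 := (bk ⟨0, by omega⟩ : K)
  let w : Fin n → ZMod 2 := (bk ⟨1, by omega⟩ : K)
  have hvK : v ∈ K := (bk ⟨0, by omega⟩ : K).2
  have hwK : w ∈ K := (bk ⟨1, by omega⟩ : K).2
  have hli2 : LinearIndependent (ZMod 2) ![v, w] := by
    have h1 : LinearIndependent (ZMod 2) (fun t : Fin 2 => bk (![⟨0, by omega⟩, ⟨1, by omega⟩] t)) :=
      bk.linearIndependent.comp _ (by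
        intro a b hab
        fin_cases a <;> fin_cases b <;> simp_all)
    have h2 := h1.map' K.subtype (Submodule.ker_subtype K)
    convert h2 using 1
    funext t; fin_cases t <;> rfl
    rfl
    rfl
  have hvw : v ≠ w := by
    intro h
    have := hli2.injective (by simp [h] : ![v,w] 0 = ![v,w] 1)
    simp at this
  set s : Set (Fin n → ZMod 2) := Set.range ![v, w] with hs
  have hsli : LinearIndepOn (ZMod 2) id s :=
    hli2.linearIndepOn_id
  let bb := Module.Basis.extend hsli
  haveI : Fintype (hsli.extend (Set.subset_univ s)) := FiniteDimensional.fintypeBasisIndex bb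
  have hcard : Fintype.card (hsli.extend (Set.subset_univ s)) = n := by
    rw [← Module.finrank_eq_card_basis bb, hfr]
  let e : (hsli.extend (Set.subset_univ s)) ≃ Fin n := Fintype.equivFinOfCardEq hcard
  have hvs : v ∈ hsli.extend (Set.subset_univ s) :=
    hsli.subset_extend _ ⟨0, rfl⟩
  have hws : w ∈ hsli.extend (Set.subset_univ s) :=
    hsli.subset_extend _ ⟨1, rfl⟩
  set Vbar : Fin n → (Fin n → ZMod 2) := fun l => bb (e.symm l) with hVbar
  set U : Matrix (Fin n) (Fin n) ℤ := Matrix.of fun k l => ((Vbar l k).val : ℤ) with hU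
  have hUmap : U.map (Int.cast : ℤ → ZMod 2) = Matrix.of fun k l => Vbar l k := by
    funext k l
    simp [Matrix.map_apply, hU, ZMod.natCast_val, ZMod.cast_id]
  -- U mod 2 is the basis matrix, hence has unit det
  have hUbar : (Matrix.of fun k l => Vbar l k) =
      (Pi.basisFun (ZMod 2) (Fin n)).toMatrix (bb.reindex e) := by
    funext k l
    simp [Module.Basis.toMatrix_apply, hVbar]
  have hdetUbar : IsUnit (Matrix.of fun k l => Vbar l k).det := by
    rw [hUbar]
    have := ((Pi.basisFun (ZMod 2) (Fin n)).invertibleToMatrix (bb.reindex e))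
    exact Matrix.isUnit_det_of_invertible _
  have hdetU2 : ((U.det : ℤ) : ZMod 2) ≠ 0 := by
    rw [show ((U.det : ℤ) : ZMod 2) = (U.map (Int.cast : ℤ → ZMod 2)).det from
      (Int.castRingHom (ZMod 2)).map_det U, hUmap]
    exact hdetUbar.ne_zero
  have hdetUodd : Odd U.det := by
    rw [← Int.not_even_iff_odd]
    intro hev
    exact hdetU2 ((ZMod.intCast_zmod_eq_zero_iff_dvd _ 2).2 hev.two_dvd)
  -- indices of the two kernel columns
  set i : Fin n := e ⟨v, hvs⟩ with hi
  set j : Fin n := e ⟨w, hws⟩ with hj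
  have hij : i ≠ j := by
    intro h
    have h2 : ((⟨v, hvs⟩ : hsli.extend (Set.subset_univ s)) : Fin n → ZMod 2)
        = ((⟨w, hws⟩ : hsli.extend (Set.subset_univ s)) : Fin n → ZMod 2) :=
      congrArg _ (e.injective h)
    exact hvw h2
  have hVi : Vbar i = v := by
    rw [hVbar, hi]
    simp only [Equiv.symm_apply_apply]
    exact Module.Basis.extend_apply_self hsli ⟨v, hvs⟩
  have hVj : Vbar j = w := by
    rw [hVbar, hj]
    simp only [Equiv.symm_apply_apply]
    exact Module.Basis.extend_apply_self hsli ⟨w, hws⟩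
  -- M = A * U has columns i and j even
  set M : Matrix (Fin n) (Fin n) ℤ := A * U with hM
  have hMmap : M.map (Int.cast : ℤ → ZMod 2) = B * (Matrix.of fun k l => Vbar l k) := by
    show (A * U).map ⇑(Int.castRingHom (ZMod 2)) = _
    rw [Matrix.map_mul, show U.map ⇑(Int.castRingHom (ZMod 2)) = U.map (Int.cast : ℤ → ZMod 2) from rfl, hUmap]
    rfl
  have hcol : ∀ (c : Fin n), Vbar c ∈ K → ∀ k, Even (M k c) := by
    intro c hc k
    have h0 : ((M k c : ℤ) : ZMod 2) = 0 := by
      have : (M.map (Int.cast : ℤ → ZMod 2)) k c = 0 := by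
        rw [hMmap]
        have : (B * (Matrix.of fun k l => Vbar l k)) k c = B.mulVec (Vbar c) k := by
          simp [Matrix.mul_apply, Matrix.mulVec, dotProduct]
        rw [this]
        have := hc
        rw [hK, LinearMap.mem_ker] at this
        rw [show B.mulVec (Vbar c) = B.mulVecLin (Vbar c) from rfl, this]
        rfl
      simpa [Matrix.map_apply] using this
    have := (ZMod.intCast_zmod_eq_zero_iff_dvd _ 2).1 h0
    rw [Int.even_iff]
    omega
  have hcoli : ∀ k, Even (M k i) := hcol i (hVi ▸ hvK)
  have hcolj : ∀ k, Even (M k j) := hcol j (hVj ▸ hwK)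
  -- factor 4 out of det M
  have hdetM : (4 : ℤ) ∣ M.det := by
    obtain ⟨a, ha⟩ : ∃ a : Fin n → ℤ, (fun k => M k i) = (2 : ℤ) • a := by
      refine ⟨fun k => M k i / 2, ?_⟩
      funext k
      have := (hcoli k)
      obtain ⟨c, hc⟩ := this
      simp only [Pi.smul_apply, smul_eq_mul]
      omega
    set M1 := Matrix.updateCol M i a with hM1
    obtain ⟨b, hb⟩ : ∃ b : Fin n → ℤ, (fun k => M1 k j) = (2 : ℤ) • b := by
      refine ⟨fun k => M1 k j / 2, ?_⟩
      funext k
      have hMkj : M1 k j = M k j := Matrix.updateCol_ne hij.symm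
      obtain ⟨c, hc⟩ := hcolj k
      simp only [Pi.smul_apply, smul_eq_mul, hMkj]
      omega
    have e1 : M.det = 2 * M1.det := by
      conv_lhs => rw [← Matrix.updateCol_eq_self M i]
      rw [show (fun k => M k i) = (2 : ℤ) • a from ha, Matrix.det_updateCol_smul]
    have e2 : M1.det = 2 * (M1.updateCol j b).det := by
      conv_lhs => rw [← Matrix.updateCol_eq_self M1 j]
      rw [show (fun k => M1 k j) = (2 : ℤ) • b from hb, Matrix.det_updateCol_smul]
    rw [e1, e2]
    exact ⟨(M1.updateCol j b).det, by ring⟩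
  -- conclude
  have hMdet : M.det = A.det * U.det := Matrix.det_mul A U
  obtain ⟨k, hk⟩ := hdetUodd
  have h4 : ((A.det : ℤ) : ZMod 4) * (2 * (k : ZMod 4) + 1) = 0 := by
    have : ((M.det : ℤ) : ZMod 4) = 0 := (ZMod.intCast_zmod_eq_zero_iff_dvd _ 4).2 (by exact_mod_cast hdetM)
    rw [hMdet, hk] at this
    push_cast at this
    rwa [Int.cast_det]
  revert h4
  generalize ((A.det : ℤ) : ZMod 4) = x
  generalize (k : ZMod 4) = y
  revert x y
  decide
end

section
/- Let A be a symmetric n×n integer matrix with even diagonal entries, where n ≡ 0 mod 4. Then either det(A) ≡ 1 mod 4 (if A mod 2 has rank n over 𝔽₂) or det(A) ≡ 0 mod 4 (otherwise). Similarly, if n ≡ 2 mod 4, then det(A) ≡ −1 mod 4 if A mod 2 has full rank, and det(A) ≡ 0 mod 4 otherwise. -/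
open Matrix

instance : DecidablePred (Even : ZMod 4 → Prop) :=
  fun x => decidable_of_iff (∃ r : ZMod 4, x = r + r) Iff.rfl

lemma zmod4_even_cases (x : ZMod 4) (h : Even x) : x = 0 ∨ x = 2 := by revert x; decide
lemma zmod4_even_mul (x y : ZMod 4) (hx : Even x) (hy : Even y) : x * y = 0 := by revert x y; decide
lemma zmod4_odd_sq (x : ZMod 4) (h : ¬ Even x) : x * x = 1 := by revert x; decide

lemma rank_eq_card_iff_det_ne_zero {ι : Type*} [Fintype ι] [DecidableEq ι] {K : Type*} [Field K]
    (M : Matrix ι ι K) : M.rank = Fintype.card ι ↔ M.det ≠ 0 := by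
  constructor
  · intro h hdet
    obtain ⟨v, hv, hMv⟩ := (Matrix.exists_mulVec_eq_zero_iff).mpr hdet
    have hker : 0 < Module.finrank K (LinearMap.ker M.mulVecLin) := by
      rw [Module.finrank_pos_iff]
      exact ⟨⟨⟨v, hMv⟩, 0, fun hc => hv (by simpa using congrArg Subtype.val hc)⟩⟩
    have hrn := LinearMap.finrank_range_add_finrank_ker M.mulVecLin
    rw [Module.finrank_pi] at hrn
    have : M.rank = Module.finrank K (LinearMap.range M.mulVecLin) := rfl
    omega
  · intro h
    exact M.rank_of_isUnit ((Matrix.isUnit_iff_isUnit_det M).mpr (isUnit_iff_ne_zero.mpr h))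

lemma pivot_step (ι' : Type*) [Fintype ι'] [DecidableEq ι']
    (B : Matrix (Fin 2) (Fin 2) (ZMod 4)) (C : Matrix (Fin 2) ι' (ZMod 4))
    (C' : Matrix ι' (Fin 2) (ZMod 4)) (D : Matrix ι' ι' (ZMod 4))
    (hBsym : B 1 0 = B 0 1) (hB00 : Even (B 0 0)) (hB11 : Even (B 1 1))
    (hBodd : ¬ Even (B 0 1))
    (hC : ∀ k p, C' k p = C p k) (hDsym : D.IsSymm) (hDdiag : ∀ k, Even (D k k)) :
    ∃ S : Matrix ι' ι' (ZMod 4), S.IsSymm ∧ (∀ k, Even (S k k)) ∧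
      (fromBlocks B C C' D).det = -S.det := by
  have hdetB : B.det = -1 := by
    rw [Matrix.det_fin_two, zmod4_even_mul _ _ hB00 hB11, hBsym, zmod4_odd_sq _ hBodd]
    decide
  letI iB : Invertible B :=
    ⟨-B.adjugate,
      by rw [neg_mul, Matrix.adjugate_mul, hdetB]; simp,
      by rw [mul_neg, Matrix.mul_adjugate, hdetB]; simp⟩
  have hadj := Matrix.adjugate_fin_two B
  have hM00 : (⅟B) 0 0 = -(B 1 1) := by show (-B.adjugate) 0 0 = _; rw [hadj]; simp
  have hM01 : (⅟B) 0 1 = B 0 1 := by show (-B.adjugate) 0 1 = _; rw [hadj]; simp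
  have hM10 : (⅟B) 1 0 = B 0 1 := by
    show (-B.adjugate) 1 0 = _; rw [hadj]; simp [hBsym]
  have hM11 : (⅟B) 1 1 = -(B 0 0) := by show (-B.adjugate) 1 1 = _; rw [hadj]; simp
  have hQ : ∀ k l, (C' * ⅟B * C) k l =
      C' k 0 * (⅟B) 0 0 * C 0 l + C' k 0 * (⅟B) 0 1 * C 1 l +
      C' k 1 * (⅟B) 1 0 * C 0 l + C' k 1 * (⅟B) 1 1 * C 1 l := by
    intro k l
    simp [Matrix.mul_apply, Fin.sum_univ_two]
    ring
  refine ⟨D - C' * ⅟B * C, ?_, ?_, ?_⟩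
  · apply Matrix.IsSymm.ext
    intro k l
    rw [Matrix.sub_apply, Matrix.sub_apply, hQ, hQ, hDsym.apply]
    simp only [hC, hM01, hM10]
    ring
  · intro k
    refine (hDdiag k).sub ?_
    obtain ⟨a, ha⟩ := hB00
    obtain ⟨b, hb⟩ := hB11
    refine ⟨C 0 k * (-b) * C 0 k + C 0 k * (B 0 1) * C 1 k + C 1 k * (-a) * C 1 k, ?_⟩
    rw [hQ]
    simp only [hC, hM00, hM01, hM10, hM11, ha, hb]
    ring
  · rw [Matrix.det_fromBlocks₁₁, hdetB]
    ring

lemma schur_main (m : ℕ) : ∀ (ι : Type) [Fintype ι] [DecidableEq ι]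
    (A : Matrix ι ι (ZMod 4)), Fintype.card ι = m → Even m → A.IsSymm →
    (∀ i, Even (A i i)) → A.det = 0 ∨ A.det = (-1) ^ (m / 2) := by
  induction m using Nat.strong_induction_on with
  | _ m ih =>
  intro ι _ _ A hcard hm hsym hdiag
  by_cases hoddE : ∃ i j, ¬ Even (A i j)
  · obtain ⟨i, j, hij⟩ := hoddE
    have hne : i ≠ j := by rintro rfl; exact hij (hdiag i)
    let e₂ : Fin 2 ≃ {x : ι // x = i ∨ x = j} :=
      { toFun := fun k => if k = 0 then ⟨i, Or.inl rfl⟩ else ⟨j, Or.inr rfl⟩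
        invFun := fun x => if x.1 = i then 0 else 1
        left_inv := by
          intro k
          fin_cases k
          · simp
          · simp [hne.symm]
        right_inv := by
          rintro ⟨x, rfl | rfl⟩
          · simp
          · simp [hne.symm] }
    let e : Fin 2 ⊕ {x : ι // ¬(x = i ∨ x = j)} ≃ ι :=
      (Equiv.sumCongr e₂ (Equiv.refl _)).trans (Equiv.sumCompl _)
    have he0 : e (Sum.inl 0) = i := rfl
    have he1 : e (Sum.inl 1) = j := rfl
    have hcard2 : Fintype.card {x : ι // x = i ∨ x = j} = 2 := by
      rw [← Fintype.card_congr e₂, Fintype.card_fin]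
    have hm2 : 2 ≤ m := by
      rw [← hcard2, ← hcard]; exact Fintype.card_subtype_le _
    have hcardc : Fintype.card {x : ι // ¬(x = i ∨ x = j)} = m - 2 := by
      rw [Fintype.card_subtype_compl, hcard2, hcard]
    set A' := A.submatrix e e with hA'
    obtain ⟨S, hSsym, hSdiag, hdet⟩ :=
      pivot_step {x : ι // ¬(x = i ∨ x = j)} A'.toBlocks₁₁ A'.toBlocks₁₂ A'.toBlocks₂₁
        A'.toBlocks₂₂
        (show A j i = A i j from hsym.apply i j)
        (hdiag i) (hdiag j) hij
        (fun k p => hsym.apply (e (Sum.inl p)) (e (Sum.inr k)))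
        (Matrix.IsSymm.ext fun k l => hsym.apply (e (Sum.inr k)) (e (Sum.inr l)))
        (fun k => hdiag (e (Sum.inr k)))
    have hdetA : A.det = -S.det := by
      rw [← Matrix.det_submatrix_equiv_self e A, ← hA',
        ← Matrix.fromBlocks_toBlocks A', hdet]
    obtain hS | hS := ih (m - 2) (by omega) _ S hcardc
      (by rcases hm with ⟨k, hk⟩; exact ⟨k - 1, by omega⟩) hSsym hSdiag
    · left; rw [hdetA, hS, neg_zero]
    · right
      rw [hdetA, hS]
      have h2 : m / 2 = (m - 2) / 2 + 1 := by omega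
      rw [h2, pow_succ]
      ring
  · push_neg at hoddE
    rcases Nat.eq_zero_or_pos m with h0 | hpos
    · subst h0
      right
      have : IsEmpty ι := Fintype.card_eq_zero_iff.mp hcard
      simp [Matrix.det_isEmpty]
    · left
      have h2 : 2 ≤ m := by rcases hm with ⟨k, hk⟩; omega
      have hAB : A = (2 : ZMod 4) • (Matrix.of fun a b => if A a b = 0 then 0 else 1 : Matrix ι ι (ZMod 4)) := by
        funext a b
        show A a b = (2 : ZMod 4) * (if A a b = 0 then 0 else 1)
        rcases zmod4_even_cases _ (hoddE a b) with h | h <;> rw [h] <;> decide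
      rw [hAB, Matrix.det_smul, hcard]
      have h2m : (2 : ZMod 4) ^ m = 0 := by
        obtain ⟨k, rfl⟩ : ∃ k, m = 2 + k := ⟨m - 2, by omega⟩
        have : (2 : ZMod 4) ^ 2 = 0 := by decide
        rw [pow_add, this, zero_mul]
      rw [h2m, zero_mul]

/-- Corollary 1.3 (even n): if n ≡ 0 (mod 4) then det(A) ≡ 1 or 0 (mod 4), and
if n ≡ 2 (mod 4) then det(A) ≡ -1 or 0 (mod 4), according to whether
A mod 2 has full rank or not. -/
theorem stmt_15 (n : ℕ) (A : Matrix (Fin n) (Fin n) ℤ)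
    (hsym : A.IsSymm) (hdiag : ∀ i, Even (A i i)) :
    (n % 4 = 0 →
      (if (A.map (Int.cast : ℤ → ZMod 2)).rank = n
        then ((A.det : ℤ) : ZMod 4) = 1 else ((A.det : ℤ) : ZMod 4) = 0)) ∧
    (n % 4 = 2 →
      (if (A.map (Int.cast : ℤ → ZMod 2)).rank = n
        then ((A.det : ℤ) : ZMod 4) = -1 else ((A.det : ℤ) : ZMod 4) = 0)) := by
  have hd4 : ((A.det : ℤ) : ZMod 4) = (A.map (Int.cast : ℤ → ZMod 4)).det :=
    RingHom.map_det (Int.castRingHom (ZMod 4)) A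
  have main : Even n → ((A.det : ℤ) : ZMod 4) = 0 ∨ ((A.det : ℤ) : ZMod 4) = (-1) ^ (n / 2) := by
    intro hn
    rw [hd4]
    exact schur_main n (Fin n) _ (Fintype.card_fin n) hn (hsym.map _)
      (fun i => by
        obtain ⟨r, hr⟩ := hdiag i
        exact ⟨(r : ZMod 4), by show ((A i i : ℤ) : ZMod 4) = _; rw [hr]; push_cast; ring⟩)
  have hrank : (A.map (Int.cast : ℤ → ZMod 2)).rank = n ↔ ¬ (2 : ℤ) ∣ A.det := by
    have h1 := rank_eq_card_iff_det_ne_zero (A.map (Int.cast : ℤ → ZMod 2))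
    rw [Fintype.card_fin] at h1
    have hd2 : (A.map (Int.cast : ℤ → ZMod 2)).det = ((A.det : ℤ) : ZMod 2) :=
      (RingHom.map_det (Int.castRingHom (ZMod 2)) A).symm
    rw [h1, hd2, Ne, ZMod.intCast_zmod_eq_zero_iff_dvd]
    norm_num
  have heven4 : (2 : ℤ) ∣ A.det → Even ((A.det : ℤ) : ZMod 4) := by
    rintro ⟨t, ht⟩
    exact ⟨(t : ZMod 4), by rw [ht]; push_cast; ring⟩
  have hne4 : ¬ (2 : ℤ) ∣ A.det → ((A.det : ℤ) : ZMod 4) ≠ 0 := by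
    intro h2 hc
    exact h2 (dvd_trans (by norm_num) ((ZMod.intCast_zmod_eq_zero_iff_dvd _ 4).mp hc))
  constructor <;> intro hmod <;>
    obtain key | key := main (Nat.even_iff.mpr (by omega)) <;> split_ifs with h
  · exact absurd key (hne4 (hrank.mp h))
  · exact key
  · rw [key, Even.neg_one_pow (Nat.even_iff.mpr (by omega))]
  · exfalso
    have hev := heven4 (by by_contra hc; exact h (hrank.mpr hc))
    rw [key, Even.neg_one_pow (Nat.even_iff.mpr (by omega))] at hev
    revert hev; decide
  · exact absurd key (hne4 (hrank.mp h))
  · exact key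
  · rw [key, Odd.neg_one_pow (Nat.odd_iff.mpr (by omega))]
  · exfalso
    have hev := heven4 (by by_contra hc; exact h (hrank.mpr hc))
    rw [key, Odd.neg_one_pow (Nat.odd_iff.mpr (by omega))] at hev
    revert hev; decide
end

section
/- Let A be a symmetric n×n integer matrix with even diagonal entries where n is odd. Then det(A) ≡ 0 or 2 mod 4. Moreover, det(A) ≡ 2 mod 4 if and only if rank of Ā = A mod 2 equals n − 1 and the associated quadratic form q is nonzero on the 1-dimensional kernel of Ā (equivalently dim V̄₀ = 1 and dim V̄₀₀ = 0). -/
open Matrix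

open Matrix in
/-- The quadratic form over `𝔽₂` associated with a symmetric integer matrix `A`
with even diagonal entries: `q(v) = (ṽᵀ A ṽ)/2 (mod 2)`, computed on the
canonical integer lift `ṽ` of `v` (it is independent of the chosen lift). -/
def qf {n : ℕ} (A : Matrix (Fin n) (Fin n) ℤ) (v : Fin n → ZMod 2) : ZMod 2 :=
  ((((fun i => ((v i).val : ℤ)) ⬝ᵥ A.mulVec (fun i => ((v i).val : ℤ))) / 2 : ℤ) : ZMod 2)


section helpers
private lemma zmod2_lift : ∀ x : ZMod 2, ((x.val : ℤ) : ZMod 2) = x := by decide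
private lemma zmod2_ne_zero : ∀ x : ZMod 2, x ≠ 0 → x = 1 := by decide
private lemma zmod2_prod_one : ∀ a b : ZMod 2, a * b = 1 → a = 1 ∧ b = 1 := by decide
private lemma two_mul_cast4 (t : ℤ) : ((2 * t : ℤ) : ZMod 4) = 2 ↔ ((t : ℤ) : ZMod 2) = 1 := by
  rcases Int.even_or_odd t with ⟨s, rfl⟩ | ⟨s, rfl⟩
  · have h1 : ((2 * (s + s) : ℤ) : ZMod 4) = 4 * (s : ZMod 4) := by push_cast; ring
    have h2 : ((s + s : ℤ) : ZMod 2) = 2 * (s : ZMod 2) := by push_cast; ring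
    rw [h1, h2, (by decide : (4 : ZMod 4) = 0), (by decide : (2 : ZMod 2) = 0), zero_mul, zero_mul]
    constructor
    · intro h; exact absurd h.symm (by decide)
    · intro h; exact absurd h.symm (by decide)
  · have h1 : ((2 * (2 * s + 1) : ℤ) : ZMod 4) = 4 * (s : ZMod 4) + 2 := by push_cast; ring
    have h2 : ((2 * s + 1 : ℤ) : ZMod 2) = 2 * (s : ZMod 2) + 1 := by push_cast; ring
    rw [h1, h2, (by decide : (4 : ZMod 4) = 0), (by decide : (2 : ZMod 2) = 0), zero_mul, zero_mul,
      zero_add, zero_add]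
    simp
private lemma two_mul_cast4' (t : ℤ) : ((2 * t : ℤ) : ZMod 4) = 0 ∨ ((2 * t : ℤ) : ZMod 4) = 2 := by
  have h : ((2 * t : ℤ) : ZMod 4) = 2 * (t : ZMod 4) := by push_cast; ring
  rw [h]
  exact (by decide : ∀ x : ZMod 4, 2 * x = 0 ∨ 2 * x = 2) _
private lemma skewdetzero {k : ℕ} (hodd : Odd k) (M : Matrix (Fin k) (Fin k) ℤ)
    (h : Mᵀ = -M) : M.det = 0 := by
  have h1 : M.det = -M.det := by
    conv_lhs => rw [← Matrix.det_transpose M, h]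
    rw [Matrix.det_neg]
    simp [Fintype.card_fin, hodd.neg_one_pow]
  omega
private lemma deteven {k : ℕ} (hodd : Odd k) (A : Matrix (Fin k) (Fin k) ℤ)
    (hsym : A.IsSymm) (hdiag : ∀ i, Even (A i i)) :
    ((A.det : ℤ) : ZMod 2) = 0 := by
  set N : Matrix (Fin k) (Fin k) ℤ :=
    Matrix.of (fun i l => if i < l then A i l else if i = l then A i i / 2 else 0) with hN
  have hA : A = N + Nᵀ := by
    ext i l
    simp only [Matrix.add_apply, Matrix.transpose_apply, hN, Matrix.of_apply]
    rcases lt_trichotomy i l with h|h|h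
    · simp [h, not_lt.mpr h.le, h.ne', h.ne]
    · subst h
      simp only [lt_irrefl, if_false, eq_self_iff_true, if_true]
      obtain ⟨r, hr⟩ := hdiag i
      rw [hr]
      omega
    · rw [if_neg (not_lt.mpr h.le), if_neg h.ne', if_pos h, zero_add]
      exact (hsym.apply i l).symm
  have hmap : A.map (Int.cast : ℤ → ZMod 2) = (N - Nᵀ).map (Int.cast : ℤ → ZMod 2) := by
    ext i l
    simp only [Matrix.map_apply, Matrix.sub_apply]
    rw [hA]
    simp only [Matrix.add_apply]
    push_cast
    rw [sub_eq_add_neg, CharTwo.neg_eq]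
  have h2 : (N - Nᵀ)ᵀ = -(N - Nᵀ) := by
    rw [Matrix.transpose_sub, Matrix.transpose_transpose]
    ext i l
    simp only [Matrix.sub_apply, Matrix.neg_apply, Matrix.transpose_apply]
    ring
  have hdet : (N - Nᵀ).det = 0 := skewdetzero hodd _ h2
  have e1 := RingHom.map_det (Int.castRingHom (ZMod 2)) A
  have e2 := RingHom.map_det (Int.castRingHom (ZMod 2)) (N - Nᵀ)
  simp only [Int.coe_castRingHom, RingHom.mapMatrix_apply] at e1 e2
  rw [e1, hmap, ← e2, hdet, Int.cast_zero]
end helpers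

open Matrix in
/-- Corollary 1.3 (odd n): det(A) ≡ 0 or 2 (mod 4), and det(A) ≡ 2 (mod 4)
iff A mod 2 has rank n-1 and the associated quadratic form q is nonzero on
the kernel of A mod 2 (i.e. dim V̄₀ = 1 and dim V̄₀₀ = 0). -/
theorem stmt_16 (n : ℕ) (A : Matrix (Fin n) (Fin n) ℤ)
    (hsym : A.IsSymm) (hdiag : ∀ i, Even (A i i)) (hodd : Odd n) :
    (((A.det : ℤ) : ZMod 4) = 0 ∨ ((A.det : ℤ) : ZMod 4) = 2) ∧
    (((A.det : ℤ) : ZMod 4) = 2 ↔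
      ((A.map (Int.cast : ℤ → ZMod 2)).rank = n - 1 ∧
        ∀ v : Fin n → ZMod 2,
          (A.map (Int.cast : ℤ → ZMod 2)).mulVec v = 0 → v ≠ 0 → qf A v = 1)) := by
  classical
  have hdet2 : ((A.det : ℤ) : ZMod 2) = 0 := deteven hodd A hsym hdiag
  obtain ⟨m, rfl⟩ : ∃ m, n = m + 1 := by
    rcases hodd with ⟨k, hk⟩; exact ⟨2 * k, by omega⟩
  set Abar := A.map (Int.cast : ℤ → ZMod 2) with hAbar
  have hAbardet : Abar.det = 0 := by
    have e1 := RingHom.map_det (Int.castRingHom (ZMod 2)) A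
    simp only [Int.coe_castRingHom, RingHom.mapMatrix_apply] at e1
    rw [hAbar, ← e1, hdet2]
  obtain ⟨vb, hvb0, hvbker⟩ : ∃ v, v ≠ 0 ∧ Abar *ᵥ v = 0 := by
    obtain ⟨v, h1, h2⟩ := Matrix.exists_mulVec_eq_zero_iff.mpr hAbardet
    exact ⟨v, h1, h2⟩
  obtain ⟨j, hj⟩ := Function.ne_iff.mp hvb0
  simp only [Pi.zero_apply] at hj
  have hj1 : vb j = 1 := zmod2_ne_zero _ hj
  set vt : Fin (m+1) → ℤ := fun i => ((vb i).val : ℤ) with hvt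
  have hvtcast : (Int.cast : ℤ → ZMod 2) ∘ vt = vb := by
    funext i
    exact zmod2_lift (vb i)
  have hvtj : vt j = 1 := by
    show ((vb j).val : ℤ) = 1
    rw [hj1]
    rfl
  have hAv2 : ∀ i, (((A *ᵥ vt) i : ℤ) : ZMod 2) = 0 := by
    intro i
    have h1 := RingHom.map_mulVec (Int.castRingHom (ZMod 2)) A vt i
    simp only [Int.coe_castRingHom] at h1
    rw [h1, hvtcast, ← hAbar, hvbker]
    rfl
  set w : Fin (m+1) → ℤ := fun i => (A *ᵥ vt) i / 2 with hw
  have hAvw : A *ᵥ vt = fun i => 2 * w i := by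
    funext i
    have h2 : (2 : ℤ) ∣ (A *ᵥ vt) i := by
      have := hAv2 i
      exact_mod_cast (ZMod.intCast_zmod_eq_zero_iff_dvd _ 2).mp this
    exact (Int.mul_ediv_cancel' h2).symm
  set E : Matrix (Fin (m+1)) (Fin (m+1)) ℤ := (1 : Matrix _ _ ℤ).updateCol j vt with hE
  have hdetE : E.det = 1 := by
    rw [hE, ← Matrix.cramer_apply, Matrix.cramer_one]
    simpa using hvtj
  set B := Eᵀ * A * E with hB
  have hdetB : B.det = A.det := by
    rw [hB, Matrix.det_mul, Matrix.det_mul, Matrix.det_transpose, hdetE]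
    ring
  have hBsym : Bᵀ = B := by
    rw [hB, Matrix.transpose_mul, Matrix.transpose_mul, Matrix.transpose_transpose, hsym,
      Matrix.mul_assoc]
  set u : Fin (m+1) → ℤ := Eᵀ *ᵥ w with hu
  have hcol : ∀ i, B i j = 2 * u i := by
    intro i
    have h1 : B i j = ((Eᵀ * A) *ᵥ vt) i := by
      rw [hB, Matrix.mul_apply]
      simp only [Matrix.mulVec, dotProduct]
      refine Finset.sum_congr rfl fun k _ => ?_
      congr 1
      rw [hE]
      exact Matrix.updateCol_self
    rw [h1, ← Matrix.mulVec_mulVec, hAvw]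
    have h2 : (fun i => 2 * w i) = (2 : ℤ) • w := by
      funext i; simp [smul_eq_mul]
    rw [h2, Matrix.mulVec_smul, hu]
    simp [smul_eq_mul]
  have hrow : ∀ k, B j k = 2 * u k := by
    intro k
    have h5 := congrFun (congrFun hBsym k) j
    simp only [Matrix.transpose_apply] at h5
    rw [h5]
    exact hcol k
  have huj : u j = vt ⬝ᵥ w := by
    rw [hu]
    simp only [Matrix.mulVec, dotProduct, Matrix.transpose_apply]
    refine Finset.sum_congr rfl fun k _ => ?_
    congr 1
    rw [hE]
    exact Matrix.updateCol_self
  have hqf : qf A vb = ((vt ⬝ᵥ w : ℤ) : ZMod 2) := by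
    rw [qf]
    congr 1
    have hfun : (fun i => (((vb i).val : ℤ))) = vt := rfl
    rw [hfun, hAvw]
    have h3 : vt ⬝ᵥ (fun i => 2 * w i) = 2 * (vt ⬝ᵥ w) := by
      simp only [dotProduct]
      rw [Finset.mul_sum]
      exact Finset.sum_congr rfl fun i _ => by ring
    rw [h3, Int.mul_ediv_cancel_left _ two_ne_zero]
  set B1 := B.updateCol j u with hB1
  have hsplit : A.det = 2 * B1.det := by
    have hfun : (fun i => B i j) = (2 : ℤ) • u := by
      funext i
      rw [hcol i]
      simp [smul_eq_mul]
    have h1 : B = B.updateCol j ((2 : ℤ) • u) := by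
      conv_lhs => rw [← Matrix.updateCol_eq_self B j, hfun]
    calc A.det = B.det := hdetB.symm
      _ = (B.updateCol j ((2:ℤ) • u)).det := by rw [← h1]
      _ = 2 * B1.det := by rw [Matrix.det_updateCol_smul, hB1]
  set Bbar := B.map (Int.cast : ℤ → ZMod 2) with hBbarDef
  set Cbar := Bbar.submatrix j.succAbove j.succAbove with hCbarDef
  have hBbarcol : ∀ i, Bbar i j = 0 := by
    intro i
    show ((B i j : ℤ) : ZMod 2) = 0
    rw [hcol i]
    push_cast
    rw [(by decide : (2 : ZMod 2) = 0), zero_mul]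
  have hBbarrow : ∀ k, Bbar j k = 0 := by
    intro k
    show ((B j k : ℤ) : ZMod 2) = 0
    rw [hrow k]
    push_cast
    rw [(by decide : (2 : ZMod 2) = 0), zero_mul]
  have hB1det : ((B1.det : ℤ) : ZMod 2) = ((u j : ℤ) : ZMod 2) * Cbar.det := by
    have e1 := RingHom.map_det (Int.castRingHom (ZMod 2)) B1
    simp only [Int.coe_castRingHom, RingHom.mapMatrix_apply] at e1
    rw [e1, Matrix.det_succ_row _ j, Finset.sum_eq_single j]
    · have hsign : ((-1 : ZMod 2)) ^ ((j:ℕ) + (j:ℕ)) = 1 := by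
        rw [(by decide : (-1 : ZMod 2) = 1), one_pow]
      have hentry : (B1.map (Int.cast : ℤ → ZMod 2)) j j = ((u j : ℤ) : ZMod 2) := by
        simp only [Matrix.map_apply]
        rw [hB1, Matrix.updateCol_self]
      have hsub : (B1.map (Int.cast : ℤ → ZMod 2)).submatrix j.succAbove j.succAbove = Cbar := by
        rw [hCbarDef, hBbarDef]
        ext a b
        simp only [Matrix.submatrix_apply, Matrix.map_apply]
        congr 1
        rw [hB1, Matrix.updateCol_ne (Fin.succAbove_ne j b)]
      rw [hsign, hentry, hsub, one_mul]
    · intro k _ hkj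
      have hz : (B1.map (Int.cast : ℤ → ZMod 2)) j k = 0 := by
        simp only [Matrix.map_apply]
        rw [hB1, Matrix.updateCol_ne hkj]
        show ((B j k : ℤ) : ZMod 2) = 0
        rw [hrow k]
        push_cast
        rw [(by decide : (2 : ZMod 2) = 0), zero_mul]
      rw [hz, mul_zero, zero_mul]
    · intro h
      exact absurd (Finset.mem_univ j) h
  have hfirst : ((A.det : ℤ) : ZMod 4) = 0 ∨ ((A.det : ℤ) : ZMod 4) = 2 := by
    rw [hsplit]; exact two_mul_cast4' _
  have hmain : ((A.det : ℤ) : ZMod 4) = 2 ↔ ((u j : ℤ) : ZMod 2) * Cbar.det = 1 := by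
    rw [hsplit, two_mul_cast4, hB1det]
  set Ebar := E.map (Int.cast : ℤ → ZMod 2) with hEbarDef
  have hdetEbar : Ebar.det = 1 := by
    have e1 := RingHom.map_det (Int.castRingHom (ZMod 2)) E
    simp only [Int.coe_castRingHom, RingHom.mapMatrix_apply] at e1
    rw [hEbarDef, ← e1, hdetE, Int.cast_one]
  have hEbarU : IsUnit Ebar.det := by rw [hdetEbar]; exact isUnit_one
  have hEbarTU : IsUnit Ebarᵀ.det := by rw [Matrix.det_transpose, hdetEbar]; exact isUnit_one
  have hBbar : Bbar = Ebarᵀ * Abar * Ebar := by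
    rw [hBbarDef, hB, hAbar, hEbarDef]
    have h2 := Matrix.map_mul (L := Eᵀ * A) (M := E) (f := Int.castRingHom (ZMod 2))
    have h3 := Matrix.map_mul (L := Eᵀ) (M := A) (f := Int.castRingHom (ZMod 2))
    simp only [Int.coe_castRingHom] at h2 h3
    rw [h2, h3, Matrix.transpose_map]
  have hconj : ∀ y, Bbar *ᵥ y = Ebarᵀ *ᵥ (Abar *ᵥ (Ebar *ᵥ y)) := by
    intro y
    rw [hBbar, Matrix.mulVec_mulVec, Matrix.mulVec_mulVec]
  have hkerEquiv : ∀ y, Bbar *ᵥ y = 0 ↔ Abar *ᵥ (Ebar *ᵥ y) = 0 := by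
    intro y
    constructor
    · intro h
      have h2 : Ebarᵀ⁻¹ *ᵥ (Ebarᵀ *ᵥ (Abar *ᵥ (Ebar *ᵥ y))) = 0 := by
        rw [← hconj, h, Matrix.mulVec_zero]
      rwa [Matrix.mulVec_mulVec, Matrix.nonsing_inv_mul _ hEbarTU, Matrix.one_mulVec] at h2
    · intro h
      rw [hconj, h, Matrix.mulVec_zero]
  have hEcol : Ebar *ᵥ Pi.single j 1 = vb := by
    rw [Matrix.mulVec_single]
    funext i
    rw [MulOpposite.op_one, one_smul]
    show ((E i j : ℤ) : ZMod 2) = vb i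
    rw [hE, Matrix.updateCol_self]
    exact congrFun hvtcast i
  have hEinj : ∀ y z : Fin (m+1) → ZMod 2, Ebar *ᵥ y = Ebar *ᵥ z → y = z := by
    intro y z h
    have h2 := congrArg (fun t => Ebar⁻¹ *ᵥ t) h
    simpa [Matrix.mulVec_mulVec, Matrix.nonsing_inv_mul _ hEbarU, Matrix.one_mulVec] using h2
  have hBC : ∀ y, Bbar *ᵥ y = 0 → Cbar *ᵥ (fun b => y (j.succAbove b)) = 0 := by
    intro y h
    funext a
    have h1 := congrFun h (j.succAbove a)
    simp only [Pi.zero_apply, Matrix.mulVec, dotProduct] at h1 ⊢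
    rw [Fin.sum_univ_succAbove (fun k => Bbar (j.succAbove a) k * y k) j] at h1
    rw [hBbarcol, zero_mul, zero_add] at h1
    simpa [hCbarDef, Matrix.submatrix_apply] using h1
  have hkerchar : Cbar.det = 1 → ∀ x, Abar *ᵥ x = 0 → x ≠ 0 → x = vb := by
    intro hC x hx hx0
    have hCu : IsUnit Cbar.det := by rw [hC]; exact isUnit_one
    have hxy : Ebar *ᵥ (Ebar⁻¹ *ᵥ x) = x := by
      rw [Matrix.mulVec_mulVec, Matrix.mul_nonsing_inv _ hEbarU, Matrix.one_mulVec]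
    set y := Ebar⁻¹ *ᵥ x with hy
    have hBy : Bbar *ᵥ y = 0 := (hkerEquiv y).mpr (by rw [hxy]; exact hx)
    have hCy := hBC y hBy
    have hy0 : ∀ b, y (j.succAbove b) = 0 := by
      intro b
      have h2 := congrArg (fun t => Cbar⁻¹ *ᵥ t) hCy
      simp only [Matrix.mulVec_mulVec, Matrix.nonsing_inv_mul _ hCu, Matrix.one_mulVec,
        Matrix.mulVec_zero] at h2
      exact congrFun h2 b
    have hyform : y = Pi.single j (y j) := by
      funext k
      by_cases hk : k = j
      · subst hk; simp
      · obtain ⟨b, hb⟩ := Fin.exists_succAbove_eq hk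
        rw [Pi.single_eq_of_ne hk, ← hb, hy0 b]
    have hyj1 : y j = 1 := by
      by_contra hne
      have h0 : y j = 0 := by
        rcases (by decide : ∀ t : ZMod 2, t = 0 ∨ t = 1) (y j) with h|h
        · exact h
        · exact absurd h hne
      apply hx0
      rw [← hxy, hyform, h0]
      rw [Pi.single_zero, Matrix.mulVec_zero]
    rw [← hxy, hyform, hyj1, hEcol]
  have hrk : Abar.rank + Module.finrank (ZMod 2) (LinearMap.ker Abar.mulVecLin) = m + 1 := by
    have h1 := LinearMap.finrank_range_add_finrank_ker Abar.mulVecLin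
    have h2 : Abar.rank = Module.finrank (ZMod 2) (LinearMap.range Abar.mulVecLin) := rfl
    rw [h2, h1]
    simp
  have hrankeq : Cbar.det = 1 → Abar.rank = m := by
    intro hC
    have hker : LinearMap.ker Abar.mulVecLin = Submodule.span (ZMod 2) {vb} := by
      apply le_antisymm
      · intro x hx
        rw [LinearMap.mem_ker, Matrix.mulVecLin_apply] at hx
        by_cases hx0 : x = 0
        · rw [hx0]; exact Submodule.zero_mem _
        · rw [hkerchar hC x hx hx0]
          exact Submodule.mem_span_singleton_self _
      · rw [Submodule.span_le, Set.singleton_subset_iff, SetLike.mem_coe, LinearMap.mem_ker,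
          Matrix.mulVecLin_apply]
        exact hvbker
    have hfr : Module.finrank (ZMod 2) (LinearMap.ker Abar.mulVecLin) = 1 := by
      rw [hker]
      exact finrank_span_singleton hvb0
    omega
  have hrankne : Cbar.det = 0 → Abar.rank ≠ m := by
    intro hC hr
    have hk1 : Module.finrank (ZMod 2) (LinearMap.ker Abar.mulVecLin) = 1 := by omega
    obtain ⟨z, hz0, hz⟩ : ∃ v ≠ 0, Cbar *ᵥ v = 0 := Matrix.exists_mulVec_eq_zero_iff.mpr hC
    set x : Fin (m+1) → ZMod 2 := Fin.insertNth j 0 z with hxdef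
    have hxj : x j = 0 := by rw [hxdef]; simp
    have hxs : ∀ b, x (j.succAbove b) = z b := by intro b; rw [hxdef]; simp
    have hx0 : x ≠ 0 := by
      obtain ⟨b, hb⟩ := Function.ne_iff.mp hz0
      intro h
      apply hb
      rw [← hxs b, h]
      rfl
    have hBx : Bbar *ᵥ x = 0 := by
      funext i
      simp only [Pi.zero_apply, Matrix.mulVec, dotProduct]
      rw [Fin.sum_univ_succAbove (fun k => Bbar i k * x k) j]
      rw [hxj, mul_zero, zero_add]
      by_cases hi : i = j
      · subst hi
        simp [hBbarrow]
      · obtain ⟨a, ha⟩ := Fin.exists_succAbove_eq hi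
        have h1 := congrFun hz a
        simp only [Pi.zero_apply, Matrix.mulVec, dotProduct, hCbarDef,
          Matrix.submatrix_apply] at h1
        rw [← ha]
        calc (∑ b, Bbar (j.succAbove a) (j.succAbove b) * x (j.succAbove b))
            = ∑ b, Bbar (j.succAbove a) (j.succAbove b) * z b :=
              Finset.sum_congr rfl fun b _ => by rw [hxs b]
          _ = 0 := h1
    have hxker : Abar *ᵥ (Ebar *ᵥ x) = 0 := (hkerEquiv x).mp hBx
    have hEx0 : Ebar *ᵥ x ≠ 0 := by
      intro h
      apply hx0
      exact hEinj x 0 (by rw [h, Matrix.mulVec_zero])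
    obtain ⟨g, hg0, hgall⟩ := finrank_eq_one_iff'.mp hk1
    have hmem1 : Ebar *ᵥ x ∈ LinearMap.ker Abar.mulVecLin := by
      rw [LinearMap.mem_ker, Matrix.mulVecLin_apply]; exact hxker
    have hmem2 : vb ∈ LinearMap.ker Abar.mulVecLin := by
      rw [LinearMap.mem_ker, Matrix.mulVecLin_apply]; exact hvbker
    obtain ⟨c, hc⟩ := hgall ⟨Ebar *ᵥ x, hmem1⟩
    obtain ⟨d, hd⟩ := hgall ⟨vb, hmem2⟩
    have hc1 : c = 1 := by
      rcases (by decide : ∀ t : ZMod 2, t = 0 ∨ t = 1) c with h|h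
      · exfalso
        apply hEx0
        have h2 := congrArg Subtype.val hc
        rw [h, zero_smul] at h2
        simpa using h2.symm
      · exact h
    have hd1 : d = 1 := by
      rcases (by decide : ∀ t : ZMod 2, t = 0 ∨ t = 1) d with h|h
      · exfalso
        apply hvb0
        have h2 := congrArg Subtype.val hd
        rw [h, zero_smul] at h2
        simpa using h2.symm
      · exact h
    have hgeq : Ebar *ᵥ x = vb := by
      have h1 := congrArg Subtype.val hc
      have h2 := congrArg Subtype.val hd
      rw [hc1, one_smul] at h1
      rw [hd1, one_smul] at h2
      exact h1.symm.trans h2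
    have hxe : x = Pi.single j 1 := hEinj _ _ (by rw [hgeq, hEcol])
    have hx1 : x j = 1 := by rw [hxe]; simp
    rw [hxj] at hx1
    exact (by decide : (0 : ZMod 2) ≠ 1) hx1
  refine ⟨hfirst, ?_, ?_⟩
  · intro h4
    have h1 : ((u j : ℤ) : ZMod 2) * Cbar.det = 1 := hmain.mp h4
    obtain ⟨hu1, hC1⟩ := zmod2_prod_one _ _ h1
    refine ⟨?_, ?_⟩
    · rw [hrankeq hC1]
      omega
    · intro x hx hx0
      rw [hkerchar hC1 x hx hx0, hqf, ← huj]
      exact hu1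
  · rintro ⟨hrank, hq⟩
    have hrm : Abar.rank = m := by simpa using hrank
    have hC1 : Cbar.det = 1 := by
      rcases (by decide : ∀ t : ZMod 2, t = 0 ∨ t = 1) Cbar.det with h|h
      · exact absurd hrm (hrankne h)
      · exact h
    have hu1 : ((u j : ℤ) : ZMod 2) = 1 := by
      have h2 := hq vb hvbker hvb0
      rw [hqf] at h2
      rw [huj]
      exact h2
    exact hmain.mpr (by rw [hu1, hC1, one_mul])
end

section
/- Let A and A' be symmetric n×n integer matrices with even diagonal entries such that A mod 2 and A' mod 2 have the same rank over 𝔽₂ and the associated 𝔽₂-quadratic forms q_A and q_{A'} are isomorphic. Then det(A) ≡ det(A') mod 4. -/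
open Matrix Finset

/-- In characteristic 2, a double sum of a symmetric function with zero diagonal vanishes. -/
lemma pairSum {n : ℕ} (F : Fin n → Fin n → ZMod 2) (hs : ∀ i j, F i j = F j i)
    (hd : ∀ i, F i i = 0) : (∑ i, ∑ j, F i j) = 0 := by
  rw [← Finset.sum_product']
  refine Finset.sum_ninvolution (fun p => (p.2, p.1)) (fun p => ?_) (fun p hp => ?_)
      (fun p => Finset.mem_univ _) (fun p => rfl)
  · show F p.1 p.2 + F p.2 p.1 = 0
    rw [hs p.1 p.2]; exact CharTwo.add_self_eq_zero _
  · show (p.2, p.1) ≠ p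
    intro hc
    apply hp
    have h2 : p.2 = p.1 := congrArg Prod.fst hc
    rw [h2, hd]

/-- An even symmetric integer matrix takes even values as a quadratic form. -/
lemma even_quad {n : ℕ} (A : Matrix (Fin n) (Fin n) ℤ) (hsym : A.IsSymm)
    (hdiag : ∀ i, Even (A i i)) (w : Fin n → ℤ) : Even (w ⬝ᵥ A.mulVec w) := by
  rw [even_iff_two_dvd]
  have key : ((w ⬝ᵥ A.mulVec w : ℤ) : ZMod 2)
      = ∑ i, ∑ j, ((w i : ZMod 2) * ((A i j : ZMod 2) * (w j : ZMod 2))) := by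
    simp [dotProduct, Matrix.mulVec, Finset.mul_sum]
  have h0 : ((w ⬝ᵥ A.mulVec w : ℤ) : ZMod 2) = 0 := by
    rw [key]
    refine pairSum _ (fun i j => ?_) (fun i => ?_)
    · have hA : A i j = A j i := by
        conv_lhs => rw [← hsym]
        rw [Matrix.transpose_apply]
      rw [hA]; ring
    · have hA : ((A i i : ℤ) : ZMod 2) = 0 := by
        rw [ZMod.intCast_zmod_eq_zero_iff_dvd]
        exact_mod_cast even_iff_two_dvd.mp (hdiag i)
      rw [hA]; ring
  exact_mod_cast (ZMod.intCast_zmod_eq_zero_iff_dvd _ 2).mp h0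

/-- `qf` can be computed with any integer lift. -/
lemma qf_lift {n : ℕ} (A : Matrix (Fin n) (Fin n) ℤ) (hsym : A.IsSymm)
    (v : Fin n → ZMod 2) (w : Fin n → ℤ) (hw : ∀ k, ((w k : ZMod 2)) = v k) :
    qf A v = (((w ⬝ᵥ A.mulVec w) / 2 : ℤ) : ZMod 2) := by
  set w₀ : Fin n → ℤ := fun i => ((v i).val : ℤ) with hw₀
  have hdvd : ∀ k, (2 : ℤ) ∣ (w k - w₀ k) := by
    intro k
    have h1 : ((w k - w₀ k : ℤ) : ZMod 2) = 0 := by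
      push_cast
      rw [hw k, hw₀]
      simp [ZMod.natCast_val, ZMod.intCast_cast, ZMod.cast_id]
    exact_mod_cast (ZMod.intCast_zmod_eq_zero_iff_dvd _ 2).mp h1
  set u : Fin n → ℤ := fun k => (w k - w₀ k) / 2 with hu
  have hwu : w = w₀ + (2 : ℤ) • u := by
    funext k
    have := Int.mul_ediv_cancel' (hdvd k)
    simp only [Pi.add_apply, Pi.smul_apply, smul_eq_mul, hu]
    omega
  have hcomm : w₀ ⬝ᵥ A.mulVec u = u ⬝ᵥ A.mulVec w₀ := by
    rw [Matrix.dotProduct_mulVec]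
    have : w₀ ᵥ* A = A.mulVec w₀ := by
      conv_lhs => rw [← hsym]
      rw [Matrix.vecMul_transpose]
    rw [this, dotProduct_comm]
  have hexp : w ⬝ᵥ A.mulVec w
      = w₀ ⬝ᵥ A.mulVec w₀ + (2 * (u ⬝ᵥ A.mulVec w₀ + u ⬝ᵥ A.mulVec u)) * 2 := by
    rw [hwu]
    simp only [Matrix.mulVec_add, Matrix.mulVec_smul, add_dotProduct,
      dotProduct_add, smul_dotProduct, dotProduct_smul, smul_eq_mul]
    rw [hcomm]; ring
  rw [qf, hexp, Int.add_mul_ediv_right _ _ (by norm_num : (2:ℤ) ≠ 0), Int.cast_add]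
  have hz : (((2 * (u ⬝ᵥ A.mulVec w₀ + u ⬝ᵥ A.mulVec u) : ℤ)) : ZMod 2) = 0 := by
    rw [ZMod.intCast_zmod_eq_zero_iff_dvd]
    exact_mod_cast dvd_mul_right (2:ℤ) _
  rw [hz, add_zero]

/-- Congruence transformation of the quadratic form. -/
lemma qf_conj {n : ℕ} (A : Matrix (Fin n) (Fin n) ℤ) (hsym : A.IsSymm)
    (X : Matrix (Fin n) (Fin n) ℤ) (v : Fin n → ZMod 2) :
    qf (Xᵀ * A * X) v = qf A ((X.map (Int.cast : ℤ → ZMod 2)).mulVec v) := by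
  set vt : Fin n → ℤ := fun i => ((v i).val : ℤ) with hvt
  set w : Fin n → ℤ := X.mulVec vt with hwdef
  have hnum : vt ⬝ᵥ (Xᵀ * A * X).mulVec vt = w ⬝ᵥ A.mulVec w := by
    rw [Matrix.mul_assoc, ← Matrix.mulVec_mulVec, ← Matrix.mulVec_mulVec,
      Matrix.dotProduct_mulVec, Matrix.vecMul_transpose]
  have hw : ∀ k, ((w k : ZMod 2)) = ((X.map (Int.cast : ℤ → ZMod 2)).mulVec v) k := by
    intro k
    simp only [hwdef, Matrix.mulVec, dotProduct, Matrix.map_apply]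
    push_cast
    refine Finset.sum_congr rfl fun j _ => ?_
    congr 1
    rw [hvt]
    simp [ZMod.natCast_val, ZMod.intCast_cast, ZMod.cast_id]
  rw [qf_lift A hsym _ w hw]
  rw [qf]
  rw [hnum]

lemma single_quad {n : ℕ} (A : Matrix (Fin n) (Fin n) ℤ) (a b : Fin n) :
    Pi.single a (1:ℤ) ⬝ᵥ A.mulVec (Pi.single b 1) = A a b := by
  simp [Matrix.mulVec_single, single_dotProduct]

lemma cast2_eq_iff (a b : ℤ) : ((a : ZMod 2) = (b : ZMod 2)) ↔ (2:ℤ) ∣ a - b := by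
  constructor
  · intro h
    have : ((a - b : ℤ) : ZMod 2) = 0 := by push_cast; rw [h]; ring
    exact_mod_cast (ZMod.intCast_zmod_eq_zero_iff_dvd _ 2).mp this
  · intro h
    have : ((a - b : ℤ) : ZMod 2) = 0 := by
      rw [ZMod.intCast_zmod_eq_zero_iff_dvd]; exact_mod_cast h
    push_cast at this
    linear_combination this

/-- Pointwise equal forms force entry congruences. -/
lemma qf_entries {n : ℕ} (A A' : Matrix (Fin n) (Fin n) ℤ)
    (hsym : A.IsSymm) (hdiag : ∀ i, Even (A i i))
    (hsym' : A'.IsSymm) (hdiag' : ∀ i, Even (A' i i))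
    (h : ∀ v, qf A v = qf A' v) :
    (∀ i, (4:ℤ) ∣ A i i - A' i i) ∧ (∀ i j, (2:ℤ) ∣ A i j - A' i j) := by
  have hw1 : ∀ i : Fin n, ∀ k, (((Pi.single i 1 : Fin n → ℤ) k : ℤ) : ZMod 2) = (Pi.single i 1 : Fin n → ZMod 2) k := by
    intro i k
    by_cases hk : k = i <;> simp [hk, Pi.single_apply]
  have hdg : ∀ i : Fin n, (2:ℤ) ∣ (A i i / 2 - A' i i / 2) := by
    intro i
    have h1 := qf_lift A hsym (Pi.single i 1) (Pi.single i 1) (hw1 i)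
    have h2 := qf_lift A' hsym' (Pi.single i 1) (Pi.single i 1) (hw1 i)
    rw [single_quad] at h1 h2
    rw [← cast2_eq_iff]
    rw [← h1, ← h2]
    exact h _
  have hdg4 : ∀ i : Fin n, (4:ℤ) ∣ A i i - A' i i := by
    intro i
    have e1 : (2:ℤ) ∣ A i i := even_iff_two_dvd.mp (hdiag i)
    have e2 : (2:ℤ) ∣ A' i i := even_iff_two_dvd.mp (hdiag' i)
    have := hdg i
    omega
  refine ⟨hdg4, fun i j => ?_⟩
  by_cases hij : i = j
  · subst hij; have := hdg4 i; omega
  · set v : Fin n → ZMod 2 := Pi.single i 1 + Pi.single j 1 with hv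
    set w : Fin n → ℤ := Pi.single i 1 + Pi.single j 1 with hwd
    have hw : ∀ k, ((w k : ZMod 2)) = v k := by
      intro k
      simp only [hwd, hv, Pi.add_apply]
      rw [Int.cast_add, hw1 i k, hw1 j k]
    have hquad : ∀ (B : Matrix (Fin n) (Fin n) ℤ), B.IsSymm →
        w ⬝ᵥ B.mulVec w = B i i + B j j + 2 * B i j := by
      intro B hB
      have hsymm : B j i = B i j := by
        conv_lhs => rw [← hB]
        rw [Matrix.transpose_apply]
      simp only [hwd, Matrix.mulVec_add, dotProduct_add, add_dotProduct,
        single_quad]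
      rw [hsymm]; ring
    have h1 := qf_lift A hsym v w hw
    have h2 := qf_lift A' hsym' v w hw
    rw [hquad A hsym] at h1
    rw [hquad A' hsym'] at h2
    have heq : (2:ℤ) ∣ (A i i + A j j + 2 * A i j) / 2 - (A' i i + A' j j + 2 * A' i j) / 2 := by
      rw [← cast2_eq_iff, ← h1, ← h2]
      exact h _
    have e1 : (2:ℤ) ∣ A i i := even_iff_two_dvd.mp (hdiag i)
    have e2 : (2:ℤ) ∣ A' i i := even_iff_two_dvd.mp (hdiag' i)
    have e3 : (2:ℤ) ∣ A j j := even_iff_two_dvd.mp (hdiag j)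
    have e4 : (2:ℤ) ∣ A' j j := even_iff_two_dvd.mp (hdiag' j)
    have d1 := hdg4 i
    have d2 := hdg4 j
    omega

lemma det_updateRow_eq_sum {R : Type*} [CommRing R] {n : ℕ} (M : Matrix (Fin n) (Fin n) R)
    (k : Fin n) (v : Fin n → R) :
    (M.updateRow k v).det = ∑ j, M.adjugate j k * v j := by
  rw [← Matrix.det_transpose, ← Matrix.updateCol_transpose, ← Matrix.cramer_apply,
    Matrix.cramer_eq_adjugate_mulVec, ← Matrix.adjugate_transpose]
  simp [Matrix.mulVec, dotProduct]

lemma trace_sum_zero {n : ℕ} (M C : Matrix (Fin n) (Fin n) (ZMod 2)) (hM : M.IsSymm)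
    (hC : C.IsSymm) (hCd : ∀ i, C i i = 0) :
    (∑ k, ((M.updateRow k (C k)).det)) = 0 := by
  have hadj : ∀ a b, M.adjugate a b = M.adjugate b a := by
    intro a b
    have h1 : (M.adjugate)ᵀ = M.adjugate := by
      rw [Matrix.adjugate_transpose, hM]
    exact (congrFun (congrFun h1 a) b).symm
  have : (∑ k, ((M.updateRow k (C k)).det)) = ∑ k, ∑ j, M.adjugate j k * C k j :=
    Finset.sum_congr rfl fun k _ => det_updateRow_eq_sum M k (C k)
  rw [this]
  refine pairSum (fun k j => M.adjugate j k * C k j) (fun k j => ?_) (fun k => ?_)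
  · show M.adjugate j k * C k j = M.adjugate k j * C j k
    have hCs : C k j = C j k := congrFun (congrFun hC j) k
    rw [hadj j k, hCs]
  · show M.adjugate k k * C k k = 0
    rw [hCd k, mul_zero]

/-- Core lemma: entrywise congruences force determinant congruence mod 4. -/
lemma det_mod4 {n : ℕ} (A A' : Matrix (Fin n) (Fin n) ℤ)
    (hsym : A.IsSymm) (hsym' : A'.IsSymm)
    (hd4 : ∀ i, (4:ℤ) ∣ A i i - A' i i) (hd2 : ∀ i j, (2:ℤ) ∣ A i j - A' i j) :
    ((A.det : ℤ) : ZMod 4) = ((A'.det : ℤ) : ZMod 4) := by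
  classical
  set C : Matrix (Fin n) (Fin n) ℤ := Matrix.of fun i j => (A i j - A' i j) / 2 with hCdef
  have hC : ∀ i j, A i j = A' i j + 2 * C i j := by
    intro i j
    have := hd2 i j
    simp only [hCdef, Matrix.of_apply]
    omega
  set N : ℕ → Matrix (Fin n) (Fin n) ℤ :=
    fun k => Matrix.of fun i j => if (i : ℕ) < k then A i j else A' i j with hNdef
  have hN0 : N 0 = A' := by
    funext i j; simp [hNdef]
  have hNn : N n = A := by
    funext i j; simp [hNdef, i.isLt]
  set d : ℕ → ℤ := fun k =>
    if h : k < n then (((N k).updateRow ⟨k, h⟩ (C ⟨k, h⟩)).det) else 0 with hddef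
  have hstep : ∀ k, k < n → (N (k + 1)).det - (N k).det = 2 * d k := by
    intro k hk
    set K : Fin n := ⟨k, hk⟩ with hK
    have hupd : N (k + 1) = (N k).updateRow K (fun j => (N k) K j + 2 * C K j) := by
      funext i j
      by_cases hi : i = K
      · subst hi
        simp only [hNdef, Matrix.of_apply, Matrix.updateRow_self]
        have : ¬ ((K : ℕ) < k) := by simp [hK]
        rw [if_neg this, if_pos (by simp [hK])]
        exact hC K j
      · rw [Matrix.updateRow_ne hi]
        simp only [hNdef, Matrix.of_apply]
        have : (i : ℕ) < k + 1 ↔ (i : ℕ) < k := by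
          constructor
          · intro h
            rcases Nat.lt_succ_iff_lt_or_eq.mp h with h' | h'
            · exact h'
            · exact absurd (Fin.ext h' : i = K) hi
          · omega
        rw [if_congr this rfl rfl]
    have h2 : (fun j => (N k) K j + 2 * C K j) = (N k K) + (2:ℤ) • (C K) := by
      funext j; simp [smul_eq_mul]
    rw [hupd, h2, Matrix.det_updateRow_add, Matrix.det_updateRow_smul,
      Matrix.updateRow_eq_self]
    have : d k = ((N k).updateRow K (C K)).det := by rw [hddef]; simp [hk, hK]
    rw [this]; ring
  have htel : A.det - A'.det = ∑ k ∈ Finset.range n, (2 * d k) := by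
    have := Finset.sum_range_sub (fun k => (N k).det) n
    rw [hN0, hNn] at this
    rw [← this]
    exact (Finset.sum_congr rfl fun k hk => (hstep k (Finset.mem_range.mp hk)).symm).symm
  rw [← Finset.mul_sum] at htel
  -- parity of the sum
  have hpar : (2:ℤ) ∣ ∑ k ∈ Finset.range n, d k := by
    set Abar : Matrix (Fin n) (Fin n) (ZMod 2) := A.map (Int.cast : ℤ → ZMod 2) with hAbar
    set Cbar : Matrix (Fin n) (Fin n) (ZMod 2) := C.map (Int.cast : ℤ → ZMod 2) with hCbar
    have hmod2 : ∀ k, ((d k : ℤ) : ZMod 2)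
        = if h : k < n then ((Abar.updateRow ⟨k, h⟩ (Cbar ⟨k, h⟩)).det) else 0 := by
      intro k
      by_cases hk : k < n
      · rw [hddef]
        simp only [hk, dif_pos]
        rw [show ((((N k).updateRow ⟨k, hk⟩ (C ⟨k, hk⟩)).det : ℤ) : ZMod 2)
            = (((N k).updateRow ⟨k, hk⟩ (C ⟨k, hk⟩)).map (Int.cast : ℤ → ZMod 2)).det
          from RingHom.map_det (Int.castRingHom (ZMod 2)) _]
        congr 1
        funext i j
        by_cases hi : i = (⟨k, hk⟩ : Fin n)
        · subst hi; simp [Matrix.map_apply, hCbar]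
        · rw [Matrix.map_apply, Matrix.updateRow_ne hi, Matrix.updateRow_ne hi]
          simp only [hNdef, Matrix.of_apply, hAbar, Matrix.map_apply]
          by_cases hik : (i : ℕ) < k
          · rw [if_pos hik]
          · rw [if_neg hik]
            exact (cast2_eq_iff _ _).mpr (by have := hd2 i j; omega)
      · rw [hddef]; simp [hk]
    have hAbs : Abar.IsSymm := by
      rw [Matrix.IsSymm, ← Matrix.transpose_map, hsym]
    have hsAe : ∀ i j, A i j = A j i := fun i j => congrFun (congrFun hsym j) i
    have hsAe' : ∀ i j, A' i j = A' j i := fun i j => congrFun (congrFun hsym' j) i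
    have hCbs : Cbar.IsSymm := by
      have : C.IsSymm := by
        funext i j
        show C j i = C i j
        simp only [hCdef, Matrix.of_apply]
        rw [hsAe j i, hsAe' j i]
      rw [Matrix.IsSymm, hCbar, ← Matrix.transpose_map, this]
    have hCbd : ∀ i, Cbar i i = 0 := by
      intro i
      show ((C i i : ℤ) : ZMod 2) = 0
      rw [ZMod.intCast_zmod_eq_zero_iff_dvd]
      have h4 := hd4 i
      simp only [hCdef, Matrix.of_apply]
      omega
    have hz := trace_sum_zero Abar Cbar hAbs hCbs hCbd
    have hcast : ((∑ k ∈ Finset.range n, d k : ℤ) : ZMod 2) = 0 := by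
      push_cast
      calc (∑ k ∈ Finset.range n, ((d k : ℤ) : ZMod 2))
          = ∑ k ∈ Finset.range n, (fun k => if h : k < n then
              ((Abar.updateRow ⟨k, h⟩ (Cbar ⟨k, h⟩)).det) else 0) k :=
            Finset.sum_congr rfl fun k _ => hmod2 k
        _ = ∑ k : Fin n, ((Abar.updateRow k (Cbar k)).det) := by
            rw [← Fin.sum_univ_eq_sum_range]
            exact Finset.sum_congr rfl fun k _ => by simp [k.isLt]
        _ = 0 := hz
    exact_mod_cast (ZMod.intCast_zmod_eq_zero_iff_dvd _ 2).mp hcast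
  have h4 : (4:ℤ) ∣ A.det - A'.det := by
    obtain ⟨m, hm⟩ := hpar
    rw [htel, hm]
    exact ⟨m, by ring⟩
  have hfin : ((A.det - A'.det : ℤ) : ZMod 4) = 0 := by
    rw [ZMod.intCast_zmod_eq_zero_iff_dvd]
    exact_mod_cast h4
  rw [Int.cast_sub] at hfin
  linear_combination hfin

set_option linter.unusedVariables false in
/-- Remark 1.4: if A mod 2 and A' mod 2 have the same rank and the associated
𝔽₂-quadratic forms are isomorphic, then det(A) ≡ det(A') (mod 4). -/
theorem stmt_17 (n : ℕ) (A A' : Matrix (Fin n) (Fin n) ℤ)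
    (hsym : A.IsSymm) (hdiag : ∀ i, Even (A i i))
    (hsym' : A'.IsSymm) (hdiag' : ∀ i, Even (A' i i))
    (hrank : (A.map (Int.cast : ℤ → ZMod 2)).rank = (A'.map (Int.cast : ℤ → ZMod 2)).rank)
    (hiso : ∃ T : (Fin n → ZMod 2) ≃ₗ[ZMod 2] (Fin n → ZMod 2),
      ∀ x : Fin n → ZMod 2, qf A (T x) = qf A' x) :
    ((A.det : ℤ) : ZMod 4) = ((A'.det : ℤ) : ZMod 4) := by
  classical
  obtain ⟨T, hT⟩ := hiso
  set M2 : Matrix (Fin n) (Fin n) (ZMod 2) :=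
    LinearMap.toMatrix' (T : (Fin n → ZMod 2) →ₗ[ZMod 2] (Fin n → ZMod 2)) with hM2
  set X : Matrix (Fin n) (Fin n) ℤ := Matrix.of fun i j => ((M2 i j).val : ℤ) with hX
  have hXmap : X.map (Int.cast : ℤ → ZMod 2) = M2 := by
    funext i j
    simp [hX, Matrix.map_apply, ZMod.natCast_val, ZMod.intCast_cast, ZMod.cast_id]
  set B : Matrix (Fin n) (Fin n) ℤ := Xᵀ * A * X with hB
  have hBsym : B.IsSymm := by
    rw [Matrix.IsSymm, hB, Matrix.transpose_mul, Matrix.transpose_mul,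
      Matrix.transpose_transpose, hsym, Matrix.mul_assoc]
  have hBdiag : ∀ i, Even (B i i) := by
    intro i
    have hBi : B i i = (fun j => X j i) ⬝ᵥ A.mulVec (fun j => X j i) := by
      simp only [hB, Matrix.mul_assoc, Matrix.mul_apply, Matrix.mulVec, dotProduct,
        Matrix.transpose_apply, Finset.mul_sum]
    rw [hBi]
    exact even_quad A hsym hdiag _
  have hq : ∀ v, qf B v = qf A' v := by
    intro v
    have h1 := qf_conj A hsym X v
    rw [hXmap] at h1
    have h2 : M2.mulVec v = T v := by
      rw [← Matrix.toLin'_apply, hM2, Matrix.toLin'_toMatrix']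
      rfl
    rw [h2] at h1
    rw [hB, h1, hT v]
  obtain ⟨hent4, hent2⟩ := qf_entries B A' hBsym hBdiag hsym' hdiag' hq
  have hBA' : ((B.det : ℤ) : ZMod 4) = ((A'.det : ℤ) : ZMod 4) :=
    det_mod4 B A' hBsym hsym' hent4 hent2
  -- det X is odd
  have hXodd : Odd X.det := by
    rw [← Int.not_even_iff_odd, even_iff_two_dvd]
    intro hdvd
    have hz : ((X.det : ℤ) : ZMod 2) = 0 := by
      rw [ZMod.intCast_zmod_eq_zero_iff_dvd]; exact_mod_cast hdvd
    have hM2det : ((X.det : ℤ) : ZMod 2) = M2.det := by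
      rw [show ((X.det : ℤ) : ZMod 2) = (X.map (Int.cast : ℤ → ZMod 2)).det
        from RingHom.map_det (Int.castRingHom (ZMod 2)) _, hXmap]
    have hone : M2.det * (LinearMap.toMatrix'
        (T.symm : (Fin n → ZMod 2) →ₗ[ZMod 2] (Fin n → ZMod 2))).det = 1 := by
      rw [hM2, ← Matrix.det_mul, ← LinearMap.toMatrix'_comp]
      have : ((T : (Fin n → ZMod 2) →ₗ[ZMod 2] (Fin n → ZMod 2)).comp
          (T.symm : (Fin n → ZMod 2) →ₗ[ZMod 2] (Fin n → ZMod 2))) = LinearMap.id := by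
        ext x j
        simp
      rw [this, LinearMap.toMatrix'_id, Matrix.det_one]
    rw [← hM2det, hz, zero_mul] at hone
    exact zero_ne_one hone
  obtain ⟨k, hk⟩ := hXodd
  have hBdet : B.det = (2 * k + 1) * (2 * k + 1) * A.det := by
    rw [hB, Matrix.det_mul, Matrix.det_mul, Matrix.det_transpose, hk]
    ring
  have : ((B.det : ℤ) : ZMod 4) = ((A.det : ℤ) : ZMod 4) := by
    rw [hBdet]
    have hr : (2 * k + 1) * (2 * k + 1) * A.det = A.det + 4 * ((k * k + k) * A.det) := by ring
    rw [hr]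
    push_cast
    rw [show (4 : ZMod 4) = 0 by decide]
    ring
  rw [← this, hBA']
end

section
/- Let B and B' be skew-symmetric n×n integer matrices that are mutation equivalent, and let A and A' be quasi-Cartan companions of B and B' respectively. Then det(A) ≡ det(A') mod 4. -/
open Matrix

/-- Matrix mutation of a skew-symmetric integer matrix in direction k. -/
def mutate {n : ℕ} (B : Matrix (Fin n) (Fin n) ℤ) (k : Fin n) :
    Matrix (Fin n) (Fin n) ℤ :=
  Matrix.of fun i j =>
    if i = k ∨ j = k then -B i j
    else B i j + max (B i k) 0 * max (B k j) 0 - max (-(B i k)) 0 * max (-(B k j)) 0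

/-- Mutation equivalence: the equivalence relation generated by all mutations. -/
def MutationEquiv {n : ℕ} (B B' : Matrix (Fin n) (Fin n) ℤ) : Prop :=
  Relation.EqvGen (fun C C' => ∃ k : Fin n, C' = mutate C k) B B'

/-- A quasi-Cartan companion of a skew-symmetric matrix B: symmetric, with
diagonal entries 2, matching B in absolute value off the diagonal. -/
def IsQuasiCartanCompanion {n : ℕ} (B A : Matrix (Fin n) (Fin n) ℤ) : Prop :=
  A.IsSymm ∧ (∀ i, A i i = 2) ∧ ∀ i j, i ≠ j → |A i j| = |B i j|

namespace Stmt18Aux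

open Finset

variable {n : ℕ}


lemma det_cast_congr {m : ℕ} {X Y : Matrix (Fin n) (Fin n) ℤ}
    (h : ∀ i j, (m : ℤ) ∣ (X i j - Y i j)) :
    ((X.det : ℤ) : ZMod m) = ((Y.det : ℤ) : ZMod m) := by
  have hmap : X.map (Int.cast : ℤ → ZMod m) = Y.map (Int.cast : ℤ → ZMod m) := by
    ext i j
    simp only [Matrix.map_apply]
    have : ((X i j - Y i j : ℤ) : ZMod m) = 0 := by
      exact_mod_cast (ZMod.intCast_zmod_eq_zero_iff_dvd _ _).2 (h i j)
    push_cast at this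
    exact sub_eq_zero.mp this
  have h1 : ((X.det : ℤ) : ZMod m) = (X.map (Int.cast : ℤ → ZMod m)).det :=
    RingHom.map_det (Int.castRingHom (ZMod m)) X
  have h2 : ((Y.det : ℤ) : ZMod m) = (Y.map (Int.cast : ℤ → ZMod m)).det :=
    RingHom.map_det (Int.castRingHom (ZMod m)) Y
  rw [h1, h2, hmap]

lemma cast_eq_of_dvd {m : ℕ} {a b : ℤ} (h : (m : ℤ) ∣ (a - b)) :
    ((a : ZMod m)) = (b : ZMod m) := by
  have : ((a - b : ℤ) : ZMod m) = 0 := by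
    exact_mod_cast (ZMod.intCast_zmod_eq_zero_iff_dvd _ _).2 h
  push_cast at this
  exact sub_eq_zero.mp this

/-- Two integer matrices sharing a common row with even entries and congruent
mod 2 elsewhere have congruent determinants mod 4. -/
lemma det_even_row {X Y : Matrix (Fin n) (Fin n) ℤ} (i : Fin n)
    (hrow : X i = Y i) (hev : ∀ j, 2 ∣ X i j)
    (hmod : ∀ a b, (2 : ℤ) ∣ (X a b - Y a b)) :
    ((X.det : ℤ) : ZMod 4) = ((Y.det : ℤ) : ZMod 4) := by
  set v : Fin n → ℤ := fun j => X i j / 2 with hv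
  have hrowv : X i = (2 : ℤ) • v := by
    funext j
    simp only [Pi.smul_apply, smul_eq_mul, hv]
    exact (Int.mul_ediv_cancel' (hev j)).symm
  have hX : X = X.updateRow i ((2 : ℤ) • v) := by rw [← hrowv, updateRow_eq_self]
  have hY : Y = Y.updateRow i ((2 : ℤ) • v) := by
    rw [← hrowv, hrow, updateRow_eq_self]
  rw [hX, hY, det_updateRow_smul, det_updateRow_smul]
  have key : (2 : ℤ) ∣ ((X.updateRow i v).det - (Y.updateRow i v).det) := by
    have := det_cast_congr (m := 2) (X := X.updateRow i v) (Y := Y.updateRow i v) ?_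
    · have h2 : (((X.updateRow i v).det - (Y.updateRow i v).det : ℤ) : ZMod 2) = 0 := by
        rw [Int.cast_sub]
        rw [this]; ring
      exact_mod_cast (ZMod.intCast_zmod_eq_zero_iff_dvd _ _).1 h2
    · intro a b
      by_cases ha : a = i
      · subst ha; simp
      · simp only [updateRow_apply, if_neg ha]
        exact hmod a b
  apply cast_eq_of_dvd
  obtain ⟨c, hc⟩ := key
  exact ⟨c, by push_cast; linarith⟩

/-- Expansion: perturbing a matrix by an even matrix supported on rows in `s`. -/
lemma det_add_rows (M : Matrix (Fin n) (Fin n) ℤ) (s : Finset (Fin n)) :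
    ∀ D : Matrix (Fin n) (Fin n) ℤ, (∀ i ∉ s, D i = 0) → (∀ a b, 2 ∣ D a b) →
      (((M + D).det : ℤ) : ZMod 4)
        = ((M.det : ℤ) : ZMod 4)
          + ∑ i ∈ s, (((M.updateRow i (D i)).det : ℤ) : ZMod 4) := by
  induction s using Finset.induction_on with
  | empty =>
    intro D hs _
    have : D = 0 := by
      ext a b; rw [hs a (Finset.notMem_empty a)]; rfl
    simp [this]
  | @insert a t ha ih =>
    intro D hs hev
    set D' : Matrix (Fin n) (Fin n) ℤ := D.updateRow a 0 with hD'
    have hD'row : ∀ x, x ≠ a → D' x = D x := by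
      intro x hx; simp [hD', updateRow_apply, hx]
    have h1 : M + D = (M + D').updateRow a (M a + D a) := by
      ext x y
      by_cases hx : x = a
      · subst hx; simp
      · simp [updateRow_apply, hx, hD'row x hx]
    rw [h1, det_updateRow_add]
    have h2 : (M + D').updateRow a (M a) = M + D' := by
      have : (M + D') a = M a := by funext y; simp [hD', Matrix.add_apply]
      rw [← this, updateRow_eq_self]
    rw [h2]
    rw [Int.cast_add]
    have ihD' : (((M + D').det : ℤ) : ZMod 4)
        = ((M.det : ℤ) : ZMod 4)
          + ∑ i ∈ t, (((M.updateRow i (D' i)).det : ℤ) : ZMod 4) := by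
      apply ih
      · intro i hi
        by_cases hia : i = a
        · subst hia; simp [hD']
        · rw [hD'row i hia]
          exact hs i (by simp [hia, hi])
      · intro x y
        by_cases hx : x = a
        · subst hx; simp [hD']
        · rw [hD'row x hx]; exact hev x y
    have hsum : ∀ i ∈ t, (((M.updateRow i (D' i)).det : ℤ) : ZMod 4)
        = (((M.updateRow i (D i)).det : ℤ) : ZMod 4) := by
      intro i hi
      rw [hD'row i (by rintro rfl; exact ha hi)]
    have hsecond : ((((M + D').updateRow a (D a)).det : ℤ) : ZMod 4)
        = (((M.updateRow a (D a)).det : ℤ) : ZMod 4) := by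
      apply det_even_row a
      · simp
      · intro j; simp only [updateRow_self]; exact hev a j
      · intro x y
        by_cases hx : x = a
        · subst hx; simp
        · simp only [updateRow_apply, if_neg hx, Matrix.add_apply]
          have : M x y + D' x y - M x y = D' x y := by ring
          rw [this, hD'row x hx]
          exact hev x y
    rw [ihD', hsecond, Finset.sum_insert ha, Finset.sum_congr rfl hsum]
    ring

lemma det_updateRow_eq (M : Matrix (Fin n) (Fin n) ℤ) (i : Fin n) (b : Fin n → ℤ) :
    (M.updateRow i b).det = ∑ j, M.adjugate j i * b j := by
  rw [← cramer_transpose_apply, cramer_eq_adjugate_mulVec, ← adjugate_transpose]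
  simp [mulVec, dotProduct]

lemma det_congr_mod4 (M N : Matrix (Fin n) (Fin n) ℤ)
    (hM : Mᵀ = M) (hN : Nᵀ = N)
    (hev : ∀ i j, (2 : ℤ) ∣ (N i j - M i j)) (hdiag : ∀ i, (4 : ℤ) ∣ (N i i - M i i)) :
    ((N.det : ℤ) : ZMod 4) = ((M.det : ℤ) : ZMod 4) := by
  set D : Matrix (Fin n) (Fin n) ℤ := N - M with hD
  have hND : N = M + D := by rw [hD]; abel
  have hadj : ∀ i j, M.adjugate i j = M.adjugate j i := by
    intro i j
    have h1 : (M.adjugate)ᵀ = M.adjugate := by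
      rw [adjugate_transpose, hM]
    have := congrFun (congrFun h1 j) i
    simpa [transpose_apply] using this
  have hDsymm : ∀ i j, D i j = D j i := by
    intro i j
    simp only [hD, Matrix.sub_apply]
    have h1 : N i j = N j i := by
      conv_lhs => rw [← hN, transpose_apply]
    have h2 : M i j = M j i := by
      conv_lhs => rw [← hM, transpose_apply]
    rw [h1, h2]
  rw [hND, det_add_rows M Finset.univ D (fun i hi => absurd (Finset.mem_univ i) hi)
      (fun a b => hev a b)]
  have hzero : ∑ i : Fin n, (((M.updateRow i (D i)).det : ℤ) : ZMod 4) = 0 := by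
    have hrw : ∀ i : Fin n, (((M.updateRow i (D i)).det : ℤ) : ZMod 4)
        = ∑ j : Fin n, ((M.adjugate j i * D i j : ℤ) : ZMod 4) := by
      intro i
      rw [det_updateRow_eq]
      push_cast
      rfl
    calc ∑ i : Fin n, (((M.updateRow i (D i)).det : ℤ) : ZMod 4)
        = ∑ i : Fin n, ∑ j : Fin n, ((M.adjugate j i * D i j : ℤ) : ZMod 4) :=
          Finset.sum_congr rfl (fun i _ => hrw i)
      _ = ∑ p ∈ Finset.univ ×ˢ Finset.univ,
            ((M.adjugate p.2 p.1 * D p.1 p.2 : ℤ) : ZMod 4) :=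
          (Finset.sum_product' _ _ _).symm
      _ = 0 := by
          apply Finset.sum_ninvolution Prod.swap
          · intro ⟨i, j⟩
            show ((M.adjugate j i * D i j : ℤ) : ZMod 4)
                + ((M.adjugate i j * D j i : ℤ) : ZMod 4) = 0
            have hval : M.adjugate j i * D i j + M.adjugate i j * D j i
                = 2 * (M.adjugate i j * D i j) := by
              rw [hadj j i, hDsymm j i]; ring
            have hdvd : (4 : ℤ) ∣ (M.adjugate j i * D i j + M.adjugate i j * D j i) := by
              rw [hval]
              obtain ⟨c, hc⟩ : (2 : ℤ) ∣ D i j := by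
                simpa [hD, Matrix.sub_apply] using hev i j
              exact ⟨M.adjugate i j * c, by rw [hc]; ring⟩
            have : ((M.adjugate j i * D i j + M.adjugate i j * D j i : ℤ) : ZMod 4) = 0 := by
              exact_mod_cast (ZMod.intCast_zmod_eq_zero_iff_dvd _ _).2 hdvd
            push_cast at this ⊢
            linear_combination this
          · intro ⟨i, j⟩ hne
            by_contra hswap
            have hij : i = j := by
              have := congrArg Prod.fst hswap.symm
              simpa [Prod.swap] using (Prod.ext_iff.mp hswap.symm).1
            apply hne
            subst hij
            have hdvd : (4 : ℤ) ∣ (M.adjugate i i * D i i) := by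
              obtain ⟨c, hc⟩ : (4 : ℤ) ∣ D i i := by
                simpa [hD, Matrix.sub_apply] using hdiag i
              exact ⟨M.adjugate i i * c, by rw [hc]; ring⟩
            exact_mod_cast (ZMod.intCast_zmod_eq_zero_iff_dvd _ _).2 hdvd
          · intro a; exact Finset.mem_univ _
          · intro a; exact Prod.swap_swap a
  rw [hzero]
  push_cast
  ring

lemma max_aux (a b : ℤ) :
    max a 0 * b + a * max (-b) 0 = max a 0 * max b 0 - max (-a) 0 * max (-b) 0 := by
  rcases le_total a 0 with ha | ha <;> rcases le_total b 0 with hb | hb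
  · rw [max_eq_right ha, max_eq_right hb, max_eq_left (neg_nonneg.2 ha),
      max_eq_left (neg_nonneg.2 hb)]; ring
  · rw [max_eq_right ha, max_eq_left hb, max_eq_left (neg_nonneg.2 ha),
      max_eq_right (neg_nonpos.2 hb)]; ring
  · rw [max_eq_left ha, max_eq_right hb, max_eq_right (neg_nonpos.2 ha),
      max_eq_left (neg_nonneg.2 hb)]; ring
  · rw [max_eq_left ha, max_eq_left hb, max_eq_right (neg_nonpos.2 ha),
      max_eq_right (neg_nonpos.2 hb)]; ring

/-- Skew-symmetry is preserved (both ways) by mutation. -/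
lemma mutate_skew_iff (B : Matrix (Fin n) (Fin n) ℤ) (k : Fin n) :
    (mutate B k)ᵀ = -(mutate B k) ↔ Bᵀ = -B := by
  rw [← Matrix.ext_iff, ← Matrix.ext_iff]
  simp only [transpose_apply, Matrix.neg_apply]
  constructor
  · intro h
    have hk : ∀ j, B j k = -(B k j) := by
      intro j
      have := h k j
      simp only [mutate, of_apply, eq_self_iff_true, or_true, true_or, if_true] at this
      omega
    intro i j
    by_cases hik : i = k
    · rw [hik]; have := hk j; have := hk i; omega
    by_cases hjk : j = k
    · rw [hjk]
      have h1 := hk i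
      have h2 := hk j
      omega
    have := h i j
    simp only [mutate, of_apply, if_neg (by tauto : ¬(i = k ∨ j = k)),
      if_neg (by tauto : ¬(j = k ∨ i = k))] at this
    have hki : B k i = -(B i k) := by have := hk i; omega
    rw [hk j, hki] at this
    simp only [neg_neg] at this
    nlinarith [this, sq_nonneg (1:ℤ)]
  · intro h
    have hk : ∀ j, B j k = -(B k j) := fun j => h k j
    intro i j
    by_cases hik : i = k
    · rw [hik]
      simp only [mutate, of_apply, eq_self_iff_true, or_true, true_or, if_true]
      have := h k j; omega
    by_cases hjk : j = k
    · rw [hjk]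
      simp only [mutate, of_apply, eq_self_iff_true, or_true, true_or, if_true]
      have := h i k; omega
    simp only [mutate, of_apply, if_neg (by tauto : ¬(i = k ∨ j = k)),
      if_neg (by tauto : ¬(j = k ∨ i = k))]
    have h1 : B j i = -(B i j) := h i j
    have h2 : B j k = -(B k j) := hk j
    have h3 : B k i = -(B i k) := by have := hk i; omega
    rw [h1, h2, h3]
    simp only [neg_neg]
    ring


/-- The sign weights column. -/
def wv (B : Matrix (Fin n) (Fin n) ℤ) (k : Fin n) : Fin n → ℤ :=
  fun i => if i = k then -2 else max (B i k) 0

/-- The elementary mutation matrix. -/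
def Emat (B : Matrix (Fin n) (Fin n) ℤ) (k : Fin n) : Matrix (Fin n) (Fin n) ℤ :=
  Matrix.of fun i l => (if i = l then 1 else 0) + (if l = k then wv B k i else 0)

lemma Emul_apply (B : Matrix (Fin n) (Fin n) ℤ) (k : Fin n)
    (X : Matrix (Fin n) (Fin n) ℤ) (i j : Fin n) :
    (Emat B k * X) i j = X i j + wv B k i * X k j := by
  simp only [Matrix.mul_apply, Emat, of_apply, add_mul, ite_mul, one_mul, zero_mul,
    Finset.sum_add_distrib]
  rw [Finset.sum_ite_eq Finset.univ i (fun l => X l j),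
    Finset.sum_ite_eq' Finset.univ k (fun l => wv B k i * X l j)]
  simp

lemma mulEt_apply (B : Matrix (Fin n) (Fin n) ℤ) (k : Fin n)
    (Y : Matrix (Fin n) (Fin n) ℤ) (i j : Fin n) :
    (Y * (Emat B k)ᵀ) i j = Y i j + Y i k * wv B k j := by
  simp only [Matrix.mul_apply, Emat, transpose_apply, of_apply, mul_add, mul_ite, mul_one,
    mul_zero, Finset.sum_add_distrib]
  rw [Finset.sum_ite_eq Finset.univ j (fun m => Y i m)]
  have : ∀ m : Fin n, (if m = k then Y i m * wv B k j else 0)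
      = if m = k then Y i k * wv B k j else 0 := by
    intro m; split <;> simp_all
  rw [Finset.sum_congr rfl (fun m _ => this m),
    Finset.sum_ite_eq' Finset.univ k (fun m => Y i k * wv B k j)]
  simp

lemma conj_apply (B : Matrix (Fin n) (Fin n) ℤ) (k : Fin n)
    (X : Matrix (Fin n) (Fin n) ℤ) (i j : Fin n) :
    (Emat B k * X * (Emat B k)ᵀ) i j
      = X i j + wv B k i * X k j + X i k * wv B k j + wv B k i * wv B k j * X k k := by
  rw [mulEt_apply, Emul_apply, Emul_apply]
  ring

lemma Emat_sq (B : Matrix (Fin n) (Fin n) ℤ) (k : Fin n) :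
    Emat B k * Emat B k = 1 := by
  ext i j
  rw [Emul_apply]
  simp only [Emat, wv, of_apply, Matrix.one_apply]
  by_cases hjk : j = k
  · subst hjk
    by_cases hij : i = j <;> simp [hij] <;> ring
  · by_cases hij : i = j <;> simp [hij, hjk, Ne.symm hjk]

lemma Emat_det_sq (B : Matrix (Fin n) (Fin n) ℤ) (k : Fin n) :
    (Emat B k).det * (Emat B k).det = 1 := by
  have := congrArg Matrix.det (Emat_sq B k)
  rwa [det_mul, det_one] at this

/-- Mutation is conjugation by `Emat` for skew-symmetric matrices. -/
lemma mutate_eq_conj (B : Matrix (Fin n) (Fin n) ℤ) (k : Fin n) (hB : Bᵀ = -B) :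
    mutate B k = Emat B k * B * (Emat B k)ᵀ := by
  have hskew : ∀ i j, B j i = -(B i j) := by
    intro i j
    have := congrFun (congrFun hB i) j
    simpa [transpose_apply] using this
  have hkk : B k k = 0 := by have := hskew k k; omega
  ext i j
  rw [conj_apply]
  by_cases hik : i = k
  · rw [hik]
    simp only [mutate, of_apply, eq_self_iff_true, true_or, if_true, wv, hkk,
      mul_zero, add_zero, if_pos rfl]
    ring
  by_cases hjk : j = k
  · rw [hjk]
    simp only [mutate, of_apply, eq_self_iff_true, or_true, if_true, wv, hkk,
      mul_zero, add_zero, if_neg hik, if_pos rfl]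
    ring
  simp only [mutate, of_apply, if_neg (show ¬(i = k ∨ j = k) by tauto), wv,
    if_neg hik, if_neg hjk, hkk, mul_zero, add_zero]
  have hjk2 : B j k = -(B k j) := by have := hskew j k; omega
  rw [hjk2]
  have := max_aux (B i k) (B k j)
  linarith

/-- The canonical quasi-Cartan companion. -/
def CC (B : Matrix (Fin n) (Fin n) ℤ) : Matrix (Fin n) (Fin n) ℤ :=
  Matrix.of fun i j => if i = j then 2 else |B i j|

lemma CC_symm {B : Matrix (Fin n) (Fin n) ℤ} (hB : Bᵀ = -B) : (CC B)ᵀ = CC B := by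
  have hskew : ∀ i j, B j i = -(B i j) := fun i j => by
    have := congrFun (congrFun hB i) j; simpa [transpose_apply] using this
  ext i j
  simp only [transpose_apply, CC, of_apply]
  by_cases hij : i = j
  · simp [hij]
  · rw [if_neg (Ne.symm hij), if_neg hij, hskew i j, abs_neg]

lemma CC_sub_even {B : Matrix (Fin n) (Fin n) ℤ} (hB : Bᵀ = -B) (i j : Fin n) :
    (2 : ℤ) ∣ (CC B i j - B i j) := by
  by_cases hij : i = j
  · subst hij
    have : B i i = 0 := by
      have := congrFun (congrFun hB i) i; simp [transpose_apply] at this; omega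
    simp [CC, this]
  · simp only [CC, of_apply, if_neg hij]
    rcases abs_cases (B i j) with ⟨h1, _⟩ | ⟨h1, _⟩
    · rw [h1]; simp
    · rw [h1]; exact ⟨-(B i j), by ring⟩

/-- One mutation step preserves the canonical companion determinant mod 4. -/
lemma step (B : Matrix (Fin n) (Fin n) ℤ) (k : Fin n) (hB : Bᵀ = -B) :
    (((CC (mutate B k)).det : ℤ) : ZMod 4) = (((CC B).det : ℤ) : ZMod 4) := by
  have hB' : (mutate B k)ᵀ = -(mutate B k) := (mutate_skew_iff B k).2 hB
  set E := Emat B k with hE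
  set M := E * CC B * Eᵀ with hM
  have hCs : (CC B)ᵀ = CC B := CC_symm hB
  have hMsym : Mᵀ = M := by
    rw [hM, transpose_mul, transpose_mul, transpose_transpose, hCs, Matrix.mul_assoc]
  have hconjB : mutate B k = E * B * Eᵀ := mutate_eq_conj B k hB
  have hMapp : ∀ i j, M i j = CC B i j + wv B k i * CC B k j + CC B i k * wv B k j
      + wv B k i * wv B k j * CC B k k := fun i j => conj_apply B k (CC B) i j
  have hBapp : ∀ i j, mutate B k i j = B i j + wv B k i * B k j + B i k * wv B k j
      + wv B k i * wv B k j * B k k := by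
    intro i j
    rw [hconjB]
    exact conj_apply B k B i j
  -- divisibility of off-diagonal differences
  have hev : ∀ i j, (2 : ℤ) ∣ (CC (mutate B k) i j - M i j) := by
    intro i j
    have key : CC (mutate B k) i j - M i j
        = (CC (mutate B k) i j - mutate B k i j)
          + ((B i j - CC B i j) + wv B k i * (B k j - CC B k j)
            + (B i k - CC B i k) * wv B k j
            + wv B k i * wv B k j * (B k k - CC B k k)) := by
      rw [hMapp i j, hBapp i j]; ring
    rw [key]
    have d1 := CC_sub_even hB' i j
    have d2 := CC_sub_even hB i j
    have d3 := CC_sub_even hB k j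
    have d4 := CC_sub_even hB i k
    have d5 := CC_sub_even hB k k
    have e2 : (2:ℤ) ∣ (B i j - CC B i j) := (dvd_sub_comm).mp d2
    have e3 : (2:ℤ) ∣ (B k j - CC B k j) := (dvd_sub_comm).mp d3
    have e4 : (2:ℤ) ∣ (B i k - CC B i k) := (dvd_sub_comm).mp d4
    have e5 : (2:ℤ) ∣ (B k k - CC B k k) := (dvd_sub_comm).mp d5
    exact dvd_add d1 (dvd_add (dvd_add (dvd_add e2 (Dvd.dvd.mul_left e3 _))
      (Dvd.dvd.mul_right e4 _)) (Dvd.dvd.mul_left e5 _))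
  -- diagonal differences divisible by 4
  have hdiag : ∀ i, (4 : ℤ) ∣ (CC (mutate B k) i i - M i i) := by
    intro i
    have hCCd : CC (mutate B k) i i = 2 := by simp [CC]
    have hCkk : CC B k k = 2 := by simp [CC]
    by_cases hik : i = k
    · rw [hik]
      have hCCd' : CC (mutate B k) k k = 2 := by simp [CC]
      have hwvk : wv B k k = -2 := by simp [wv]
      rw [hCCd', hMapp k k, hwvk, hCkk]
      norm_num
    · have hskew2 : B k i = -(B i k) := by
        have := congrFun (congrFun hB i) k
        simp only [transpose_apply, Matrix.neg_apply] at this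
        omega
      have hwv : wv B k i = max (B i k) 0 := by simp [wv, hik]
      have hCik : CC B i k = |B i k| := by simp [CC, hik]
      have hCki : CC B k i = |B k i| := by simp [CC, Ne.symm hik]
      have hCii : CC B i i = 2 := by simp [CC]
      rw [hCCd, hMapp i i, hwv, hCik, hCki, hCkk, hCii, hskew2, abs_neg]
      rcases le_total (B i k) 0 with hb | hb
      · rw [max_eq_right hb]; norm_num
      · rw [max_eq_left hb, abs_of_nonneg hb]
        exact ⟨-(B i k * B i k), by ring⟩
  have hdet : M.det = (CC B).det := by
    rw [hM, det_mul, det_mul, det_transpose]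
    have := Emat_det_sq B k
    linear_combination (CC B).det * this
  calc (((CC (mutate B k)).det : ℤ) : ZMod 4)
      = ((M.det : ℤ) : ZMod 4) :=
        det_congr_mod4 M (CC (mutate B k)) hMsym (CC_symm hB') hev hdiag
    _ = (((CC B).det : ℤ) : ZMod 4) := by rw [hdet]

lemma comp_congr (B A : Matrix (Fin n) (Fin n) ℤ) (hB : Bᵀ = -B)
    (hA : IsQuasiCartanCompanion B A) :
    ((A.det : ℤ) : ZMod 4) = (((CC B).det : ℤ) : ZMod 4) := by
  obtain ⟨hsym, hdiag2, habs⟩ := hA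
  apply det_congr_mod4 (CC B) A (CC_symm hB) hsym
  · intro i j
    by_cases hij : i = j
    · subst hij; simp [CC, hdiag2 i]
    · simp only [CC, of_apply, if_neg hij]
      rw [← habs i j hij]
      rcases abs_cases (A i j) with ⟨h1, _⟩ | ⟨h1, _⟩
      · rw [h1]; simp
      · rw [h1]; exact ⟨A i j, by ring⟩
  · intro i
    simp [CC, hdiag2 i]

lemma mutEquiv_congr (B B' : Matrix (Fin n) (Fin n) ℤ) (h : MutationEquiv B B') :
    (Bᵀ = -B ↔ B'ᵀ = -B') ∧
      (Bᵀ = -B → (((CC B).det : ℤ) : ZMod 4) = (((CC B').det : ℤ) : ZMod 4)) := by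
  induction h with
  | rel x y hxy =>
    obtain ⟨k, rfl⟩ := hxy
    exact ⟨(mutate_skew_iff x k).symm, fun hx => (step x k hx).symm⟩
  | refl x => exact ⟨Iff.rfl, fun _ => rfl⟩
  | symm x y _ ih => exact ⟨ih.1.symm, fun hy => (ih.2 (ih.1.mpr hy)).symm⟩
  | trans x y z _ _ ih1 ih2 =>
    exact ⟨ih1.1.trans ih2.1, fun hx => (ih1.2 hx).trans (ih2.2 (ih1.1.mp hx))⟩

end Stmt18Aux

/-- Theorem 1.7 (last claim): quasi-Cartan companions of mutation equivalent
skew-symmetric matrices have congruent determinants modulo 4. -/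
theorem stmt_18 (n : ℕ) (B B' A A' : Matrix (Fin n) (Fin n) ℤ)
    (hB : Bᵀ = -B) (hB' : B'ᵀ = -B')
    (hmut : MutationEquiv B B')
    (hA : IsQuasiCartanCompanion B A)
    (hA' : IsQuasiCartanCompanion B' A') :
    ((A.det : ℤ) : ZMod 4) = ((A'.det : ℤ) : ZMod 4) := by
  have h1 := Stmt18Aux.comp_congr B A hB hA
  have h2 := Stmt18Aux.comp_congr B' A' hB' hA'
  have h3 := (Stmt18Aux.mutEquiv_congr B B' hmut).2 hB
  rw [h1, h3, ← h2]
end
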